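/- arXiv:1502.03840 — 12 statements merged into one kernel-verified Lean document; each statement's English description precedes it below -/
import Mathlib

section
/- Under the optimal-price first-order condition, κ(v) tends to +∞ as v tends to +∞ (part of the market-share convergence lemma). -/
open Filter Real

theorem statement_0
    (α₂ β₁ q₀ C : ℝ) (hα₂ : 0 < α₂) (hβ₁ : 0 < β₁) (hq₀ : 0 < q₀) (hC : 0 < C)
    (r : ℝ → ℝ) (hr : ∀ v, 0 < v → 0 < r v)
    (κ η P₀ : ℝ → ℝ)
    (hκ : ∀ v, 0 < v → κ v = v * Real.exp (-(α₂ * r v)))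
    (hη : ∀ v, 0 < v → η v = (q₀ + κ v) ^ β₁ / ((q₀ + κ v) ^ β₁ + C))
    (hP₀ : ∀ v, 0 < v → P₀ v = q₀ / (q₀ + κ v))
    (hfoc : ∀ v, 0 < v →
      α₂ * β₁ * r v * (1 - η v) * (1 - P₀ v) + α₂ * r v * P₀ v = 1) :
    Tendsto κ atTop atTop := by
  rw [tendsto_atTop]
  intro K
  set K' := max K 0 with hK'def
  have hK'0 : 0 ≤ K' := le_max_right _ _
  have hpowK' : 0 < (q₀ + K') ^ β₁ := Real.rpow_pos_of_pos (by linarith) _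
  set c := C / ((q₀ + K') ^ β₁ + C) with hcdef
  have hc : 0 < c := by positivity
  set d := min (β₁ * c) 1 with hddef
  have hd0 : 0 < d := lt_min (by positivity) one_pos
  have hd1 : d ≤ 1 := min_le_right _ _
  filter_upwards [eventually_ge_atTop (max (K' * Real.exp (1 / d)) 1)] with v hv
  have hv1 : (1 : ℝ) ≤ v := le_trans (le_max_right _ _) hv
  have hv0 : 0 < v := lt_of_lt_of_le one_pos hv1
  have hrv : 0 < r v := hr v hv0
  have hx : 0 < α₂ * r v := mul_pos hα₂ hrv
  have hκv : κ v = v * Real.exp (-(α₂ * r v)) := hκ v hv0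
  have hκpos : 0 < κ v := by rw [hκv]; positivity
  by_cases hcase : K ≤ κ v
  · exact hcase
  push_neg at hcase
  have hκK' : κ v ≤ K' := le_trans hcase.le (le_max_left _ _)
  have hden : 0 < q₀ + κ v := by linarith
  have hP : P₀ v = q₀ / (q₀ + κ v) := hP₀ v hv0
  have hP0 : 0 < P₀ v := by rw [hP]; positivity
  have hP1 : P₀ v ≤ 1 := by rw [hP, div_le_one hden]; linarith
  have hpow : 0 < (q₀ + κ v) ^ β₁ := Real.rpow_pos_of_pos hden _
  have hη' : 1 - η v = C / ((q₀ + κ v) ^ β₁ + C) := by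
    rw [hη v hv0]; field_simp; ring
  have hmono : (q₀ + κ v) ^ β₁ ≤ (q₀ + K') ^ β₁ :=
    Real.rpow_le_rpow hden.le (by linarith) hβ₁.le
  have hηc : c ≤ 1 - η v := by
    rw [hη', hcdef]
    gcongr
  have h1P : 0 ≤ 1 - P₀ v := by linarith
  have hD : d ≤ β₁ * (1 - η v) * (1 - P₀ v) + P₀ v := by
    have h1 : d * (1 - P₀ v) ≤ β₁ * (1 - η v) * (1 - P₀ v) := by
      have : d ≤ β₁ * (1 - η v) := le_trans (min_le_left _ _)
        (by nlinarith)
      nlinarith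
    nlinarith
  have hxeq : (α₂ * r v) * (β₁ * (1 - η v) * (1 - P₀ v) + P₀ v) = 1 := by
    linear_combination hfoc v hv0
  have hxle : α₂ * r v ≤ 1 / d := by
    rw [le_div_iff₀ hd0]
    nlinarith
  have h1 : Real.exp (-(1 / d)) ≤ Real.exp (-(α₂ * r v)) :=
    Real.exp_le_exp.2 (by linarith)
  have h2 : K' * Real.exp (1 / d) ≤ v := le_trans (le_max_left _ _) hv
  have h3 : K' * Real.exp (1 / d) * Real.exp (-(1 / d)) ≤ v * Real.exp (-(α₂ * r v)) :=
    mul_le_mul h2 h1 (Real.exp_pos _).le (by linarith)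
  have heq : K' * Real.exp (1 / d) * Real.exp (-(1 / d)) = K' := by
    rw [mul_assoc, ← Real.exp_add]; simp
  have : K ≤ K' := le_max_left _ _
  linarith [hκv ▸ h3, heq ▸ h3]
end

section
/- Under the optimal-price first-order condition, the opt-out probability P₀(v) = q₀/(q₀ + κ(v)) tends to 0 as v tends to +∞ (part of the market-share convergence lemma). -/
open Filter Real

theorem statement_1
    (α₂ β₁ q₀ C : ℝ) (hα₂ : 0 < α₂) (hβ₁ : 0 < β₁) (hq₀ : 0 < q₀) (hC : 0 < C)
    (r : ℝ → ℝ) (hr : ∀ v, 0 < v → 0 < r v)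
    (κ η P₀ : ℝ → ℝ)
    (hκ : ∀ v, 0 < v → κ v = v * Real.exp (-(α₂ * r v)))
    (hη : ∀ v, 0 < v → η v = (q₀ + κ v) ^ β₁ / ((q₀ + κ v) ^ β₁ + C))
    (hP₀ : ∀ v, 0 < v → P₀ v = q₀ / (q₀ + κ v))
    (hfoc : ∀ v, 0 < v →
      α₂ * β₁ * r v * (1 - η v) * (1 - P₀ v) + α₂ * r v * P₀ v = 1) :
    Tendsto P₀ atTop (nhds 0) := by
  have hκpos : ∀ v, 0 < v → 0 < κ v := by
    intro v hv
    rw [hκ v hv]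
    positivity
  -- bound on α₂ * r v
  have hbound : ∀ v, 0 < v → α₂ * r v ≤ (q₀ + κ v) / q₀ := by
    intro v hv
    have hκv := hκpos v hv
    have hden : 0 < q₀ + κ v := by linarith
    have hηle : η v ≤ 1 := by
      rw [hη v hv]
      have hA : (0:ℝ) ≤ (q₀ + κ v) ^ β₁ := Real.rpow_nonneg hden.le _
      rw [div_le_one (by linarith)]
      linarith
    have hP₀lt : P₀ v < 1 := by
      rw [hP₀ v hv, div_lt_one hden]
      linarith
    have hP₀pos : 0 < P₀ v := by
      rw [hP₀ v hv]; positivity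
    have hfst : 0 ≤ α₂ * β₁ * r v * (1 - η v) * (1 - P₀ v) := by
      have := hr v hv
      have h1 : 0 ≤ 1 - η v := by linarith
      have h2 : 0 ≤ 1 - P₀ v := by linarith
      positivity
    have h := hfoc v hv
    have hle : α₂ * r v * P₀ v ≤ 1 := by linarith
    rw [hP₀ v hv] at hle
    have : α₂ * r v * q₀ ≤ q₀ + κ v := by
      have := (div_le_one hden).mpr (le_refl (q₀ + κ v))
      calc α₂ * r v * q₀ = α₂ * r v * (q₀ / (q₀ + κ v)) * (q₀ + κ v) := by
            field_simp
        _ ≤ 1 * (q₀ + κ v) := by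
            apply mul_le_mul_of_nonneg_right hle hden.le
        _ = q₀ + κ v := one_mul _
    rw [le_div_iff₀ hq₀]
    linarith
  have hκtop : Tendsto κ atTop atTop := by
    rw [tendsto_atTop]
    intro M
    filter_upwards [eventually_ge_atTop (max 1 (M * Real.exp ((q₀ + M) / q₀)))]
      with v hv
    have hv1 : (1:ℝ) ≤ v := le_trans (le_max_left _ _) hv
    have hv0 : 0 < v := by linarith
    by_cases hcase : M ≤ κ v
    · exact hcase
    · push_neg at hcase
      have hb := hbound v hv0
      have hb2 : α₂ * r v ≤ (q₀ + M) / q₀ := by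
        calc α₂ * r v ≤ (q₀ + κ v) / q₀ := hb
          _ ≤ (q₀ + M) / q₀ := by gcongr
      have hexp : Real.exp (-((q₀ + M) / q₀)) ≤ Real.exp (-(α₂ * r v)) :=
        Real.exp_le_exp.mpr (by linarith)
      have hvM : M * Real.exp ((q₀ + M) / q₀) ≤ v := le_trans (le_max_right _ _) hv
      have : M ≤ v * Real.exp (-((q₀ + M) / q₀)) := by
        have := mul_le_mul_of_nonneg_right hvM (Real.exp_pos (-((q₀ + M) / q₀))).le
        rwa [mul_assoc, ← Real.exp_add, add_neg_cancel, Real.exp_zero, mul_one] at this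
      calc M ≤ v * Real.exp (-((q₀ + M) / q₀)) := this
        _ ≤ v * Real.exp (-(α₂ * r v)) := by
            apply mul_le_mul_of_nonneg_left hexp hv0.le
        _ = κ v := (hκ v hv0).symm
  have hdentop : Tendsto (fun v => q₀ + κ v) atTop atTop :=
    tendsto_atTop_add_const_left _ _ hκtop
  have hlim : Tendsto (fun v => q₀ / (q₀ + κ v)) atTop (nhds 0) :=
    Tendsto.div_atTop tendsto_const_nhds hdentop
  apply hlim.congr'
  filter_upwards [eventually_gt_atTop 0] with v hv
  exact (hP₀ v hv).symm
end

section
/- Under the optimal-price first-order condition, the EV market share η(v) = (q₀ + κ(v))^β₁ / ((q₀ + κ(v))^β₁ + C) tends to 1 as v tends to +∞ (part of the market-share convergence lemma). -/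
open Filter Real

theorem statement_2
    (α₂ β₁ q₀ C : ℝ) (hα₂ : 0 < α₂) (hβ₁ : 0 < β₁) (hq₀ : 0 < q₀) (hC : 0 < C)
    (r : ℝ → ℝ) (hr : ∀ v, 0 < v → 0 < r v)
    (κ η P₀ : ℝ → ℝ)
    (hκ : ∀ v, 0 < v → κ v = v * Real.exp (-(α₂ * r v)))
    (hη : ∀ v, 0 < v → η v = (q₀ + κ v) ^ β₁ / ((q₀ + κ v) ^ β₁ + C))
    (hP₀ : ∀ v, 0 < v → P₀ v = q₀ / (q₀ + κ v))
    (hfoc : ∀ v, 0 < v →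
      α₂ * β₁ * r v * (1 - η v) * (1 - P₀ v) + α₂ * r v * P₀ v = 1) :
    Tendsto η atTop (nhds 1) := by
  have hκpos : ∀ v, 0 < v → 0 < κ v := by
    intro v hv
    rw [hκ v hv]
    positivity
  have hαr : ∀ v, 0 < v → α₂ * r v * (q₀ / (q₀ + κ v)) ≤ 1 := by
    intro v hv
    have hκv := hκpos v hv
    have hden : (0:ℝ) < q₀ + κ v := by linarith
    have hA : (0:ℝ) < (q₀ + κ v) ^ β₁ := Real.rpow_pos_of_pos hden β₁
    have hη1 : η v ≤ 1 := by
      rw [hη v hv, div_le_one (by linarith)]; linarith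
    have hP1 : P₀ v ≤ 1 := by
      rw [hP₀ v hv, div_le_one hden]; linarith
    have hr' := hr v hv
    have h1 : 0 ≤ α₂ * β₁ * r v * (1 - η v) * (1 - P₀ v) :=
      mul_nonneg (mul_nonneg (by positivity) (by linarith)) (by linarith)
    have h2 := hfoc v hv
    rw [← hP₀ v hv]
    linarith
  have hκtop : Tendsto κ atTop atTop := by
    rw [tendsto_atTop]
    intro M
    filter_upwards [eventually_ge_atTop (max 1 ((M + 1) * Real.exp ((q₀ + M) / q₀)))]
      with v hv
    have hv1 : (1:ℝ) ≤ v := le_trans (le_max_left _ _) hv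
    have hv2 : (M + 1) * Real.exp ((q₀ + M) / q₀) ≤ v := le_trans (le_max_right _ _) hv
    have hv0 : 0 < v := by linarith
    by_contra hMκ
    push_neg at hMκ
    have hκv := hκpos v hv0
    have hden : (0:ℝ) < q₀ + κ v := by linarith
    have h1 := hαr v hv0
    have h2 : α₂ * r v * q₀ ≤ q₀ + κ v := by
      rw [← mul_div_assoc, div_le_one hden] at h1
      linarith
    have h3 : α₂ * r v ≤ (q₀ + M) / q₀ := by
      rw [le_div_iff₀ hq₀]
      nlinarith [hMκ.le]
    have h4 : Real.exp (-((q₀ + M) / q₀)) ≤ Real.exp (-(α₂ * r v)) :=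
      Real.exp_le_exp.mpr (by linarith)
    have h5 : (M + 1) * Real.exp ((q₀ + M) / q₀) * Real.exp (-((q₀ + M) / q₀)) ≤
        v * Real.exp (-(α₂ * r v)) := by
      have := mul_le_mul hv2 h4 (Real.exp_pos _).le (by linarith)
      linarith
    rw [mul_assoc, ← Real.exp_add] at h5
    simp at h5
    rw [hκ v hv0] at hMκ
    linarith
  have hA : Tendsto (fun v => (q₀ + κ v) ^ β₁) atTop atTop :=
    (tendsto_rpow_atTop hβ₁).comp (tendsto_atTop_add_const_left _ q₀ hκtop)
  have hAC : Tendsto (fun v => (q₀ + κ v) ^ β₁ + C) atTop atTop :=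
    tendsto_atTop_add_const_right _ C hA
  have hinv : Tendsto (fun v => C / ((q₀ + κ v) ^ β₁ + C)) atTop (nhds 0) := by
    have := hAC.inv_tendsto_atTop.const_mul C
    simpa [div_eq_mul_inv] using this
  have hlim : Tendsto (fun v => 1 - C / ((q₀ + κ v) ^ β₁ + C)) atTop (nhds 1) := by
    have := (tendsto_const_nhds (x := (1:ℝ)) (f := atTop)).sub hinv
    simpa using this
  refine hlim.congr' ?_
  filter_upwards [eventually_gt_atTop (0:ℝ)] with v hv
  have hκv := hκpos v hv
  have hden : (0:ℝ) < q₀ + κ v := by linarith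
  have hApos : (0:ℝ) < (q₀ + κ v) ^ β₁ := Real.rpow_pos_of_pos hden β₁
  rw [hη v hv]
  field_simp
  ring
end

section
/- For every v > 0, the denominator H(v) satisfies the identity H(v) = (β₁·η(v)·(1 − P₀(v)) − P₀(v)) + α₂·r(v)·P₀(v)·(1 − β₁·η(v)·(1 − P₀(v))), as a consequence of the optimal-price first-order condition. -/
open Filter Real

theorem statement_5
    (α₂ β₁ q₀ C : ℝ) (hα₂ : 0 < α₂) (hβ₁ : 0 < β₁) (hq₀ : 0 < q₀) (hC : 0 < C)
    (r : ℝ → ℝ) (hr : ∀ v, 0 < v → 0 < r v)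
    (κ η P₀ : ℝ → ℝ)
    (hκ : ∀ v, 0 < v → κ v = v * Real.exp (-(α₂ * r v)))
    (hη : ∀ v, 0 < v → η v = (q₀ + κ v) ^ β₁ / ((q₀ + κ v) ^ β₁ + C))
    (hP₀ : ∀ v, 0 < v → P₀ v = q₀ / (q₀ + κ v))
    (hfoc : ∀ v, 0 < v →
      α₂ * β₁ * r v * (1 - η v) * (1 - P₀ v) + α₂ * r v * P₀ v = 1)
    (H : ℝ → ℝ)
    (hH : ∀ v, 0 < v → H v =
      α₂ * β₁ ^ 2 * r v * η v * (1 - η v) * (1 - P₀ v) ^ 2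
      - α₂ * β₁ * r v * (1 - η v) * P₀ v * (1 - P₀ v)
      + α₂ * r v * P₀ v * (1 - P₀ v)) :
    ∀ v, 0 < v → H v =
      (β₁ * η v * (1 - P₀ v) - P₀ v) + α₂ * r v * P₀ v * (1 - β₁ * η v * (1 - P₀ v)) := by
  intro v hv
  rw [hH v hv]
  linear_combination (β₁ * η v * (1 - P₀ v) - P₀ v) * (hfoc v hv)
end

section
/- Under the optimal-price first-order condition, the denominator H(v) is bounded below away from zero for large v: there exist c > 0 and v̄ > 0 such that H(v) ≥ c for all v ≥ v̄. -/
open Filter Real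

set_option maxHeartbeats 1000000 in
theorem statement_6
    (α₂ β₁ q₀ C : ℝ) (hα₂ : 0 < α₂) (hβ₁ : 0 < β₁) (hq₀ : 0 < q₀) (hC : 0 < C)
    (r : ℝ → ℝ) (hr : ∀ v, 0 < v → 0 < r v)
    (κ η P₀ : ℝ → ℝ)
    (hκ : ∀ v, 0 < v → κ v = v * Real.exp (-(α₂ * r v)))
    (hη : ∀ v, 0 < v → η v = (q₀ + κ v) ^ β₁ / ((q₀ + κ v) ^ β₁ + C))
    (hP₀ : ∀ v, 0 < v → P₀ v = q₀ / (q₀ + κ v))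
    (hfoc : ∀ v, 0 < v →
      α₂ * β₁ * r v * (1 - η v) * (1 - P₀ v) + α₂ * r v * P₀ v = 1)
    (H : ℝ → ℝ)
    (hH : ∀ v, 0 < v → H v =
      α₂ * β₁ ^ 2 * r v * η v * (1 - η v) * (1 - P₀ v) ^ 2
      - α₂ * β₁ * r v * (1 - η v) * P₀ v * (1 - P₀ v)
      + α₂ * r v * P₀ v * (1 - P₀ v)) :
    ∃ c > 0, ∃ vbar > 0, ∀ v, vbar ≤ v → c ≤ H v := by
  obtain ⟨ε, hε0, hε1, hεβ⟩ : ∃ ε : ℝ, 0 < ε ∧ ε ≤ 1 / 4 ∧ ε ≤ β₁ / 4 := by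
    refine ⟨min β₁ 1 / 4, ?_, ?_, ?_⟩
    · have : 0 < min β₁ 1 := lt_min hβ₁ one_pos
      linarith
    · have : min β₁ 1 ≤ 1 := min_le_right _ _
      linarith
    · have : min β₁ 1 ≤ β₁ := min_le_left _ _
      linarith
  obtain ⟨M, hM0, hMq, hMC⟩ :
      ∃ M : ℝ, 0 < M ∧ q₀ / ε ≤ M ∧ (C / ε) ^ (β₁⁻¹) ≤ M := by
    refine ⟨max (q₀ / ε) ((C / ε) ^ (β₁⁻¹)) + 1, ?_, ?_, ?_⟩
    · have h1 : (0:ℝ) ≤ (C / ε) ^ (β₁⁻¹) := Real.rpow_nonneg (by positivity) _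
      have h2 := le_max_right (q₀ / ε) ((C / ε) ^ (β₁⁻¹))
      linarith
    · have := le_max_left (q₀ / ε) ((C / ε) ^ (β₁⁻¹)); linarith
    · have := le_max_right (q₀ / ε) ((C / ε) ^ (β₁⁻¹)); linarith
  refine ⟨ε, hε0, (M + 1) * Real.exp ((q₀ + M) / q₀), by positivity, ?_⟩
  intro v hv
  have hv0 : 0 < v := lt_of_lt_of_le (by positivity) hv
  have hrv : 0 < r v := hr v hv0
  have hk : κ v = v * Real.exp (-(α₂ * r v)) := hκ v hv0
  have hk0 : 0 < κ v := by rw [hk]; positivity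
  have hqk : 0 < q₀ + κ v := by linarith
  -- P₀ bounds
  have hp : P₀ v = q₀ / (q₀ + κ v) := hP₀ v hv0
  have hp0 : 0 < P₀ v := by rw [hp]; positivity
  have hp1 : P₀ v < 1 := by
    rw [hp, div_lt_one hqk]; linarith
  -- η bounds
  have hs0 : 0 < (q₀ + κ v) ^ β₁ := Real.rpow_pos_of_pos hqk _
  have ha : η v = (q₀ + κ v) ^ β₁ / ((q₀ + κ v) ^ β₁ + C) := hη v hv0
  have ha0 : 0 < η v := by rw [ha]; positivity
  have ha1 : η v < 1 := by
    rw [ha, div_lt_one (by linarith)]; linarith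
  -- FOC
  have hfocv := hfoc v hv0
  have hD0 : 0 ≤ α₂ * β₁ * r v * (1 - η v) * (1 - P₀ v) := by
    have h1 : (0:ℝ) ≤ 1 - η v := by linarith
    have h2 : (0:ℝ) ≤ 1 - P₀ v := by linarith
    positivity
  have hBp1 : α₂ * r v * P₀ v ≤ 1 := by linarith
  -- α₂ * r v * q₀ ≤ q₀ + κ v
  have hAq : α₂ * r v * q₀ ≤ q₀ + κ v := by
    have h := mul_le_mul_of_nonneg_right (hp ▸ hBp1) hqk.le
    rw [one_mul, mul_assoc, div_mul_cancel₀ _ hqk.ne'] at h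
    exact h
  -- κ v ≥ M
  have hkM : M ≤ κ v := by
    by_contra hlt
    push_neg at hlt
    have hAle : α₂ * r v ≤ (q₀ + M) / q₀ := by
      rw [le_div_iff₀ hq₀]; linarith
    have hexp : Real.exp (-((q₀ + M) / q₀)) ≤ Real.exp (-(α₂ * r v)) := by
      apply Real.exp_le_exp.2; linarith
    have hfin : M + 1 ≤ κ v := by
      calc M + 1
          = ((M + 1) * Real.exp ((q₀ + M) / q₀)) * Real.exp (-((q₀ + M) / q₀)) := by
            rw [mul_assoc, ← Real.exp_add]; simp
        _ ≤ v * Real.exp (-((q₀ + M) / q₀)) :=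
            mul_le_mul_of_nonneg_right hv (Real.exp_nonneg _)
        _ ≤ v * Real.exp (-(α₂ * r v)) :=
            mul_le_mul_of_nonneg_left hexp hv0.le
        _ = κ v := hk.symm
    linarith
  -- P₀ v ≤ ε
  have hpε : P₀ v ≤ ε := by
    rw [hp, div_le_iff₀ hqk]
    have h1 : q₀ / ε ≤ q₀ + κ v := by linarith
    have h2 := mul_le_mul_of_nonneg_left h1 hε0.le
    rw [mul_div_cancel₀ _ hε0.ne'] at h2
    exact h2
  -- 1 - η v ≤ ε
  have haε : 1 - η v ≤ ε := by
    have hsM : C / ε ≤ (q₀ + κ v) ^ β₁ := by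
      have h1 : (C / ε) ^ (β₁⁻¹) ≤ q₀ + κ v := by linarith
      have h2 : ((C / ε) ^ (β₁⁻¹)) ^ β₁ ≤ (q₀ + κ v) ^ β₁ :=
        Real.rpow_le_rpow (Real.rpow_nonneg (by positivity) _) h1 hβ₁.le
      rwa [← Real.rpow_mul (by positivity), inv_mul_cancel₀ hβ₁.ne',
        Real.rpow_one] at h2
    have hCs : C ≤ ε * (q₀ + κ v) ^ β₁ := by
      have h2 := mul_le_mul_of_nonneg_left hsM hε0.le
      rw [mul_div_cancel₀ _ hε0.ne'] at h2
      exact h2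
    have heq : 1 - η v = C / ((q₀ + κ v) ^ β₁ + C) := by
      rw [ha]; field_simp; ring
    rw [heq, div_le_iff₀ (by linarith)]
    nlinarith [mul_nonneg hε0.le hC.le]
  -- Final assembly
  have hη34 : (3:ℝ)/4 ≤ η v := by linarith
  have hp14 : P₀ v ≤ 1/4 := by linarith
  have hprod : β₁ * (3/4) * (3/4) ≤ β₁ * η v * (1 - P₀ v) :=
    mul_le_mul (mul_le_mul_of_nonneg_left hη34 hβ₁.le)
      (by linarith : (3:ℝ)/4 ≤ 1 - P₀ v) (by norm_num)
      (by positivity)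
  have hX : 0 ≤ β₁ * η v * (1 - P₀ v) - P₀ v - ε := by nlinarith
  have hY : 0 ≤ 1 - P₀ v - ε := by linarith
  have ht0 : 0 ≤ α₂ * r v * P₀ v := by positivity
  have hfocε : ε * (α₂ * β₁ * r v * (1 - η v) * (1 - P₀ v) + α₂ * r v * P₀ v)
      = ε := by rw [hfocv, mul_one]
  rw [hH v hv0]
  nlinarith [mul_nonneg hD0 hX, mul_nonneg ht0 hY, hfocε]
end

section
/- Under the optimal-price first-order condition, h(v) tends to 0 as v tends to +∞. -/
open Filter Real

lemma key_ineq (β₁ p η : ℝ) (hβ : 0 < β₁) (hp : 0 < p) (hp2 : p ≤ 1/2)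
    (hη2 : 1/2 ≤ η) (hη1 : η < 1) (hba : β₁ * (1 - η) ≤ 1/4) :
    0 < β₁^2*η*(1-η)*(1-p)^2 - β₁*(1-η)*p*(1-p) + p*(1-p) ∧
    (β₁*(1-η)*(1-p) + p)^2 /
      (β₁^2*η*(1-η)*(1-p)^2 - β₁*(1-η)*p*(1-p) + p*(1-p))
      ≤ 8/(min β₁ 1) * (β₁*(1-η) + p) := by
  have ha : 0 < 1 - η := by linarith
  set c : ℝ := min β₁ 1 with hc_def
  have hc : 0 < c := lt_min hβ one_pos
  have hcb : c ≤ β₁ := min_le_left _ _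
  have hc1 : c ≤ 1 := min_le_right _ _
  have hS : 0 < β₁ * (1-η) + p := by positivity
  have h1 : (1/4 : ℝ) ≤ (1-p)^2 := by nlinarith
  have ht : (1/8 : ℝ) ≤ η * (1-p)^2 := by nlinarith
  have h2 : β₁^2*(1-η)/8 ≤ β₁^2*η*(1-η)*(1-p)^2 := by
    nlinarith [mul_le_mul_of_nonneg_left ht (by positivity : (0:ℝ) ≤ β₁^2*(1-η))]
  have hu : (3/8 : ℝ) ≤ (1-p)*(1-β₁*(1-η)) := by nlinarith
  have h3 : 3*p/8 ≤ p*(1-p) - β₁*(1-η)*p*(1-p) := by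
    nlinarith [mul_le_mul_of_nonneg_left hu hp.le]
  have hG : c/8*(β₁*(1-η)+p) ≤ β₁^2*η*(1-η)*(1-p)^2 - β₁*(1-η)*p*(1-p) + p*(1-p) := by
    nlinarith [mul_nonneg (mul_nonneg (sub_nonneg.2 hcb) hβ.le) ha.le,
      mul_nonneg (sub_nonneg.2 hc1) hp.le]
  have hdpos : 0 < c/8*(β₁*(1-η)+p) := by positivity
  have hGpos : 0 < β₁^2*η*(1-η)*(1-p)^2 - β₁*(1-η)*p*(1-p) + p*(1-p) :=
    lt_of_lt_of_le hdpos hG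
  refine ⟨hGpos, ?_⟩
  have hD0 : 0 ≤ β₁*(1-η)*(1-p) + p := by nlinarith
  have hD : β₁*(1-η)*(1-p) + p ≤ β₁*(1-η) + p := by
    have : β₁*(1-η)*(1-p) ≤ β₁*(1-η)*1 := by
      apply mul_le_mul_of_nonneg_left (by linarith) (by positivity)
    linarith
  have hsq : (β₁*(1-η)*(1-p) + p)^2 ≤ (β₁*(1-η)+p)^2 := pow_le_pow_left₀ hD0 hD 2
  calc (β₁*(1-η)*(1-p) + p)^2 /
      (β₁^2*η*(1-η)*(1-p)^2 - β₁*(1-η)*p*(1-p) + p*(1-p))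
      ≤ (β₁*(1-η)+p)^2 / (c/8*(β₁*(1-η)+p)) :=
        div_le_div₀ (by positivity) hsq hdpos hG
  _ = 8/c * (β₁*(1-η) + p) := by field_simp

theorem statement_7
    (α₂ β₁ q₀ C : ℝ) (hα₂ : 0 < α₂) (hβ₁ : 0 < β₁) (hq₀ : 0 < q₀) (hC : 0 < C)
    (r : ℝ → ℝ) (hr : ∀ v, 0 < v → 0 < r v)
    (κ η P₀ : ℝ → ℝ)
    (hκ : ∀ v, 0 < v → κ v = v * Real.exp (-(α₂ * r v)))
    (hη : ∀ v, 0 < v → η v = (q₀ + κ v) ^ β₁ / ((q₀ + κ v) ^ β₁ + C))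
    (hP₀ : ∀ v, 0 < v → P₀ v = q₀ / (q₀ + κ v))
    (hfoc : ∀ v, 0 < v →
      α₂ * β₁ * r v * (1 - η v) * (1 - P₀ v) + α₂ * r v * P₀ v = 1)
    (H : ℝ → ℝ)
    (hH : ∀ v, 0 < v → H v =
      α₂ * β₁ ^ 2 * r v * η v * (1 - η v) * (1 - P₀ v) ^ 2
      - α₂ * β₁ * r v * (1 - η v) * P₀ v * (1 - P₀ v)
      + α₂ * r v * P₀ v * (1 - P₀ v))
    (h : ℝ → ℝ)
    (hh : ∀ v, 0 < v → h v = (β₁ * (1 - η v) * (1 - P₀ v) + P₀ v) / H v) :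
    Tendsto h atTop (nhds 0) := by
  -- basic positivity facts
  have hκpos : ∀ v, 0 < v → 0 < κ v := by
    intro v hv; rw [hκ v hv]; positivity
  have hden : ∀ v, 0 < v → 0 < q₀ + κ v := fun v hv => by linarith [hκpos v hv]
  have hPpos : ∀ v, 0 < v → 0 < P₀ v := by
    intro v hv; rw [hP₀ v hv]; exact div_pos hq₀ (hden v hv)
  have hPlt : ∀ v, 0 < v → P₀ v < 1 := by
    intro v hv; rw [hP₀ v hv]
    exact (div_lt_one (hden v hv)).2 (by linarith [hκpos v hv])
  have hApos : ∀ v, 0 < v → 0 < (q₀ + κ v) ^ β₁ :=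
    fun v hv => Real.rpow_pos_of_pos (hden v hv) β₁
  have hηpos : ∀ v, 0 < v → 0 < η v := by
    intro v hv; rw [hη v hv]
    exact div_pos (hApos v hv) (by linarith [hApos v hv])
  have hηlt : ∀ v, 0 < v → η v < 1 := by
    intro v hv; rw [hη v hv]
    exact (div_lt_one (by linarith [hApos v hv])).2 (by linarith)
  have hone : ∀ v, 0 < v → 1 - η v = C / ((q₀ + κ v) ^ β₁ + C) := by
    intro v hv; rw [hη v hv]
    have hA := hApos v hv
    field_simp
    ring
  -- FOC reformulation
  have hfoc' : ∀ v, 0 < v →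
      α₂ * r v * (β₁ * (1 - η v) * (1 - P₀ v) + P₀ v) = 1 := by
    intro v hv; linear_combination hfoc v hv
  -- κ tends to infinity
  have hκtop : Tendsto κ atTop atTop := by
    rw [tendsto_atTop]
    intro M
    set M' : ℝ := max M 0 with hM'
    have hM'0 : 0 ≤ M' := le_max_right _ _
    filter_upwards [eventually_gt_atTop (max 1 (M' * Real.exp ((q₀ + M')/q₀)))]
      with v hv
    have hv1 : 0 < v := lt_of_lt_of_le one_pos (le_trans (le_max_left _ _) hv.le)
    by_contra hcon
    push_neg at hcon
    have hκM : κ v ≤ M' := le_trans hcon.le (le_max_left _ _)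
    -- α₂ * r v ≤ (q₀ + κ v)/q₀
    have hDge : q₀/(q₀ + κ v) ≤ β₁ * (1 - η v) * (1 - P₀ v) + P₀ v := by
      rw [← hP₀ v hv1]
      have h1 := hηlt v hv1; have h2 := hPlt v hv1
      nlinarith [mul_nonneg (mul_nonneg hβ₁.le (by linarith : (0:ℝ) ≤ 1 - η v))
        (by linarith : (0:ℝ) ≤ 1 - P₀ v)]
    have hDpos : 0 < q₀/(q₀ + κ v) := div_pos hq₀ (hden v hv1)
    have hr1 : α₂ * r v ≤ (q₀ + κ v)/q₀ := by
      have h1 : α₂ * r v * (q₀/(q₀ + κ v)) ≤ 1 := by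
        calc α₂ * r v * (q₀/(q₀ + κ v))
            ≤ α₂ * r v * (β₁ * (1 - η v) * (1 - P₀ v) + P₀ v) := by
              apply mul_le_mul_of_nonneg_left hDge
              exact (mul_pos hα₂ (hr v hv1)).le
        _ = 1 := hfoc' v hv1
      have h2 : α₂ * r v * q₀ ≤ q₀ + κ v := by
        rw [← mul_div_assoc, div_le_one (hden v hv1)] at h1
        exact h1
      rw [le_div_iff₀ hq₀]
      exact h2
    have hveq : v = κ v * Real.exp (α₂ * r v) := by
      rw [hκ v hv1, Real.exp_neg]
      have := Real.exp_pos (α₂ * r v)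
      field_simp
    have hbound : v ≤ M' * Real.exp ((q₀ + M')/q₀) := by
      rw [hveq]
      have e1 : Real.exp (α₂ * r v) ≤ Real.exp ((q₀ + M')/q₀) := by
        apply Real.exp_le_exp.2
        apply le_trans hr1
        gcongr
      exact mul_le_mul hκM e1 (Real.exp_pos _).le hM'0
    have : max 1 (M' * Real.exp ((q₀ + M')/q₀)) < v := hv
    have : M' * Real.exp ((q₀ + M')/q₀) < v := lt_of_le_of_lt (le_max_right _ _) this
    linarith
  -- limits
  have hdenTop : Tendsto (fun v => q₀ + κ v) atTop atTop :=
    tendsto_atTop_add_const_left _ q₀ hκtop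
  have hPtend : Tendsto P₀ atTop (nhds 0) := by
    apply Tendsto.congr' ?_ (Tendsto.div_atTop (tendsto_const_nhds (x := q₀)) hdenTop)
    filter_upwards [eventually_gt_atTop 0] with v hv
    exact (hP₀ v hv).symm
  have hATop : Tendsto (fun v => (q₀ + κ v) ^ β₁ + C) atTop atTop :=
    tendsto_atTop_add_const_right _ C ((tendsto_rpow_atTop hβ₁).comp hdenTop)
  have haTend : Tendsto (fun v => 1 - η v) atTop (nhds 0) := by
    apply Tendsto.congr' ?_ (Tendsto.div_atTop (tendsto_const_nhds (x := C)) hATop)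
    filter_upwards [eventually_gt_atTop 0] with v hv
    exact (hone v hv).symm
  -- bound tends to 0
  have hBtend : Tendsto (fun v => 8/(min β₁ 1) * (β₁*(1 - η v) + P₀ v)) atTop (nhds 0) := by
    have := ((haTend.const_mul β₁).add hPtend).const_mul (8/(min β₁ 1))
    simpa using this
  have hbm : Tendsto (fun v => β₁ * (1 - η v)) atTop (nhds 0) := by
    simpa using haTend.const_mul β₁
  -- squeeze
  apply tendsto_of_tendsto_of_tendsto_of_le_of_le' (tendsto_const_nhds (x := (0:ℝ))) hBtend
  · -- eventually 0 ≤ h v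
    filter_upwards [eventually_gt_atTop 0,
      hPtend.eventually_le_const (by norm_num : (0:ℝ) < 1/2),
      haTend.eventually_lt_const (by norm_num : (0:ℝ) < 1/2),
      hbm.eventually_le_const (by positivity : (0:ℝ) < 1/4)]
      with v hv hp2 hη2 hba
    obtain ⟨hGpos, -⟩ := key_ineq β₁ (P₀ v) (η v) hβ₁ (hPpos v hv) hp2
      (by linarith) (hηlt v hv) (by simpa using hba)
    have hhv : h v = (β₁*(1 - η v)*(1 - P₀ v) + P₀ v)^2 /
        (β₁^2*(η v)*(1 - η v)*(1 - P₀ v)^2 - β₁*(1 - η v)*(P₀ v)*(1 - P₀ v)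
          + (P₀ v)*(1 - P₀ v)) := by
      have hDpos : 0 < β₁*(1 - η v)*(1 - P₀ v) + P₀ v := by
        have h1 := hηlt v hv; have h2 := hPlt v hv; have h3 := hPpos v hv
        nlinarith [mul_nonneg (mul_nonneg hβ₁.le (by linarith : (0:ℝ) ≤ 1 - η v))
          (by linarith : (0:ℝ) ≤ 1 - P₀ v)]
      have hHD : H v * (β₁*(1 - η v)*(1 - P₀ v) + P₀ v)
          = β₁^2*(η v)*(1 - η v)*(1 - P₀ v)^2 - β₁*(1 - η v)*(P₀ v)*(1 - P₀ v)
            + (P₀ v)*(1 - P₀ v) := by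
        rw [hH v hv]
        linear_combination (β₁^2*(η v)*(1 - η v)*(1 - P₀ v)^2
          - β₁*(1 - η v)*(P₀ v)*(1 - P₀ v) + (P₀ v)*(1 - P₀ v)) * hfoc' v hv
      have hHpos : 0 < H v := by
        have h0 : 0 < H v * (β₁*(1 - η v)*(1 - P₀ v) + P₀ v) := hHD ▸ hGpos
        nlinarith [h0, hDpos]
      rw [hh v hv, div_eq_div_iff hHpos.ne' hGpos.ne']
      linear_combination (-(β₁*(1 - η v)*(1 - P₀ v) + P₀ v)) * hHD
    rw [hhv]
    positivity
  · -- eventually h v ≤ bound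
    filter_upwards [eventually_gt_atTop 0,
      hPtend.eventually_le_const (by norm_num : (0:ℝ) < 1/2),
      haTend.eventually_lt_const (by norm_num : (0:ℝ) < 1/2),
      hbm.eventually_le_const (by positivity : (0:ℝ) < 1/4)]
      with v hv hp2 hη2 hba
    obtain ⟨hGpos, hle⟩ := key_ineq β₁ (P₀ v) (η v) hβ₁ (hPpos v hv) hp2
      (by linarith) (hηlt v hv) (by simpa using hba)
    have hhv : h v = (β₁*(1 - η v)*(1 - P₀ v) + P₀ v)^2 /
        (β₁^2*(η v)*(1 - η v)*(1 - P₀ v)^2 - β₁*(1 - η v)*(P₀ v)*(1 - P₀ v)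
          + (P₀ v)*(1 - P₀ v)) := by
      have hDpos : 0 < β₁*(1 - η v)*(1 - P₀ v) + P₀ v := by
        have h1 := hηlt v hv; have h2 := hPlt v hv; have h3 := hPpos v hv
        nlinarith [mul_nonneg (mul_nonneg hβ₁.le (by linarith : (0:ℝ) ≤ 1 - η v))
          (by linarith : (0:ℝ) ≤ 1 - P₀ v)]
      have hHD : H v * (β₁*(1 - η v)*(1 - P₀ v) + P₀ v)
          = β₁^2*(η v)*(1 - η v)*(1 - P₀ v)^2 - β₁*(1 - η v)*(P₀ v)*(1 - P₀ v)
            + (P₀ v)*(1 - P₀ v) := by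
        rw [hH v hv]
        linear_combination (β₁^2*(η v)*(1 - η v)*(1 - P₀ v)^2
          - β₁*(1 - η v)*(P₀ v)*(1 - P₀ v) + (P₀ v)*(1 - P₀ v)) * hfoc' v hv
      have hHpos : 0 < H v := by
        have h0 : 0 < H v * (β₁*(1 - η v)*(1 - P₀ v) + P₀ v) := hHD ▸ hGpos
        nlinarith [h0, hDpos]
      rw [hh v hv, div_eq_div_iff hHpos.ne' hGpos.ne']
      linear_combination (-(β₁*(1 - η v)*(1 - P₀ v) + P₀ v)) * hHD
    rw [hhv]
    exact hle
end

section
/- Assume in addition that r is differentiable on (0, +∞). Then v·r′(v) tends to 1/α₂ as v tends to +∞. -/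
open Filter Real

private lemma aux_Mpos (β₁ q₀ C p x : ℝ) (hβ₁ : 0 < β₁) (hq₀ : 0 < q₀) (hC : 0 < C)
    (hx : 0 < x) (hp2 : 2 * β₁ * C ≤ p) :
    0 < q₀ * (p + C) ^ 2 - β₁ * C * q₀ * (p + C) + β₁ ^ 2 * C * p * x := by
  have hp : 0 < p := lt_of_lt_of_le (by positivity) hp2
  nlinarith [mul_pos hq₀ (add_pos hp hC), mul_pos (mul_pos (mul_pos (mul_pos hβ₁ hβ₁) hC) hp) hx]

private lemma aux_bound (β₁ q₀ C p x : ℝ) (hβ₁ : 0 < β₁) (hq₀ : 0 < q₀) (hC : 0 < C)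
    (hx : 0 < x) (hp1 : C ≤ p) (hp2 : 2 * β₁ * C ≤ p) :
    (β₁ * C * x + q₀ * (p + C)) ^ 2 /
      (x * (q₀ * (p + C) ^ 2 - β₁ * C * q₀ * (p + C) + β₁ ^ 2 * C * p * x))
    ≤ 4 * C * (p + C)⁻¹ + 4 * q₀ * x⁻¹ := by
  have hp : 0 < p := lt_of_lt_of_le hC hp1
  have hpC : 0 < p + C := by linarith
  set M := q₀ * (p + C) ^ 2 - β₁ * C * q₀ * (p + C) + β₁ ^ 2 * C * p * x with hMdef
  have hM : 0 < M := aux_Mpos β₁ q₀ C p x hβ₁ hq₀ hC hx hp2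
  have h4 : 4 * C * (p + C)⁻¹ + 4 * q₀ * x⁻¹ = (4 * C * x + 4 * q₀ * (p + C)) / ((p + C) * x) := by
    field_simp
  rw [h4, div_le_div_iff₀ (by positivity) (by positivity)]
  have hM1 : q₀ * (p + C) * (p + C) ≤ 2 * M := by
    have : β₁ * C ≤ p / 2 := by linarith
    nlinarith [mul_pos (mul_pos (mul_pos (mul_pos hβ₁ hβ₁) hC) hp) hx,
      mul_pos hq₀ hpC]
  have hM2 : β₁ ^ 2 * C * (p + C) * x ≤ 2 * M := by
    nlinarith [mul_pos hq₀ (mul_pos hpC hpC), mul_pos (mul_pos hβ₁ hβ₁) (mul_pos hC hx),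
      mul_pos hq₀ hpC]
  have hDsq : (β₁ * C * x + q₀ * (p + C)) ^ 2 ≤ 2 * (β₁ * C * x) ^ 2 + 2 * (q₀ * (p + C)) ^ 2 := by
    nlinarith [sq_nonneg (β₁ * C * x - q₀ * (p + C))]
  have e1 : (β₁ * C * x + q₀ * (p + C)) ^ 2 * ((p + C) * x)
      ≤ (2 * (β₁ * C * x) ^ 2 + 2 * (q₀ * (p + C)) ^ 2) * ((p + C) * x) :=
    mul_le_mul_of_nonneg_right hDsq (by positivity)
  have e2 : 2 * (β₁ * C * x) ^ 2 * ((p + C) * x) ≤ 4 * C * x * (x * M) := by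
    nlinarith [mul_le_mul_of_nonneg_left hM2 (show (0:ℝ) ≤ 2 * C * x ^ 2 by positivity)]
  have e3 : 2 * (q₀ * (p + C)) ^ 2 * ((p + C) * x) ≤ 4 * q₀ * (p + C) * (x * M) := by
    nlinarith [mul_le_mul_of_nonneg_left hM1 (show (0:ℝ) ≤ 2 * q₀ * ((p + C) * x) by positivity)]
  nlinarith [e1, e2, e3]

private lemma aux_star (α₂ β₁ q₀ C x ρ : ℝ) (hq₀ : 0 < q₀) (hC : 0 < C) (hx : 0 < x)
    (h1 : α₂ * β₁ * ρ * (1 - (q₀ + x) ^ β₁ / ((q₀ + x) ^ β₁ + C)) * (1 - q₀ / (q₀ + x))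
      + α₂ * ρ * (q₀ / (q₀ + x)) = 1) :
    α₂ * ρ * (β₁ * C * x + q₀ * ((q₀ + x) ^ β₁ + C)) = (q₀ + x) * ((q₀ + x) ^ β₁ + C) := by
  have hu : (0:ℝ) < q₀ + x := by linarith
  have hp : (0:ℝ) < (q₀ + x) ^ β₁ := rpow_pos_of_pos hu _
  have hpc : (0:ℝ) < (q₀ + x) ^ β₁ + C := by linarith
  field_simp at h1
  have h2 : (q₀ + x) * (α₂ * ρ * (β₁ * C * x + q₀ * ((q₀ + x) ^ β₁ + C)))
      = (q₀ + x) * ((q₀ + x) * ((q₀ + x) ^ β₁ + C)) := by linear_combination (q₀ + x) * h1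
  exact mul_left_cancel₀ hu.ne' h2

private lemma aux_deriv (α₂ β₁ q₀ C v : ℝ) (hq₀ : 0 < q₀)
    (hv : 0 < v) (r : ℝ → ℝ)
    (hdiff : DifferentiableOn ℝ r (Set.Ioi 0))
    (hstar : ∀ w, 0 < w → α₂ * r w *
        (β₁ * C * (w * Real.exp (-(α₂ * r w))) + q₀ * ((q₀ + w * Real.exp (-(α₂ * r w))) ^ β₁ + C))
      = (q₀ + w * Real.exp (-(α₂ * r w))) * ((q₀ + w * Real.exp (-(α₂ * r w))) ^ β₁ + C)) :
    α₂ * v * deriv r v *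
        ((β₁ * C * (v * Real.exp (-(α₂ * r v))) + q₀ * ((q₀ + v * Real.exp (-(α₂ * r v))) ^ β₁ + C)) ^ 2
          + (v * Real.exp (-(α₂ * r v))) *
            (q₀ * ((q₀ + v * Real.exp (-(α₂ * r v))) ^ β₁ + C) ^ 2
              - β₁ * C * q₀ * ((q₀ + v * Real.exp (-(α₂ * r v))) ^ β₁ + C)
              + β₁ ^ 2 * C * (q₀ + v * Real.exp (-(α₂ * r v))) ^ β₁ * (v * Real.exp (-(α₂ * r v)))))
      = (v * Real.exp (-(α₂ * r v))) *
            (q₀ * ((q₀ + v * Real.exp (-(α₂ * r v))) ^ β₁ + C) ^ 2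
              - β₁ * C * q₀ * ((q₀ + v * Real.exp (-(α₂ * r v))) ^ β₁ + C)
              + β₁ ^ 2 * C * (q₀ + v * Real.exp (-(α₂ * r v))) ^ β₁ * (v * Real.exp (-(α₂ * r v)))) := by
  set ρ' := deriv r v with hρ'
  set e := Real.exp (-(α₂ * r v)) with he
  have hx : (0:ℝ) < v * e := mul_pos hv (exp_pos _)
  have hu : (0:ℝ) < q₀ + v * e := by linarith
  set x := v * e with hxdef
  set p := (q₀ + x) ^ β₁ with hpdef
  set qq := (q₀ + x) ^ (β₁ - 1) with hqdef
  have hqu : qq * (q₀ + x) = p := by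
    rw [hqdef, hpdef, Real.rpow_sub hu, Real.rpow_one, div_mul_cancel₀ _ hu.ne']
  have hrd : HasDerivAt r ρ' v :=
    (hdiff.differentiableAt (isOpen_Ioi.mem_nhds hv)).hasDerivAt
  set K := e * (1 - α₂ * v * ρ') with hKdef
  have hK : HasDerivAt (fun w => w * Real.exp (-(α₂ * r w))) K v := by
    have := (hasDerivAt_id v).mul ((hrd.const_mul α₂).neg.exp)
    simp only [id_eq] at this
    refine this.congr_deriv ?_
    rw [hKdef, he]; simp only [Pi.neg_apply]; ring
  have hP : HasDerivAt (fun w => (q₀ + w * Real.exp (-(α₂ * r w))) ^ β₁) (β₁ * qq * K) v := by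
    have := (hK.const_add q₀).rpow_const (p := β₁) (Or.inl hu.ne')
    convert this using 1
    rw [hqdef]; ring
  have hL : HasDerivAt
      (fun w => α₂ * r w * (β₁ * C * (w * Real.exp (-(α₂ * r w)))
        + q₀ * ((q₀ + w * Real.exp (-(α₂ * r w))) ^ β₁ + C)))
      (α₂ * ρ' * (β₁ * C * x + q₀ * (p + C)) + α₂ * r v * (β₁ * C * K + q₀ * (β₁ * qq * K))) v := by
    have := (hrd.const_mul α₂).mul ((hK.const_mul (β₁ * C)).add ((hP.add_const C).const_mul q₀))
    exact this
    try ring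
  have hR : HasDerivAt
      (fun w => (q₀ + w * Real.exp (-(α₂ * r w))) * ((q₀ + w * Real.exp (-(α₂ * r w))) ^ β₁ + C))
      (K * (p + C) + (q₀ + x) * (β₁ * qq * K)) v := by
    have := (hK.const_add q₀).mul (hP.add_const C)
    exact this
    try ring
  have hLR : (fun w => α₂ * r w * (β₁ * C * (w * Real.exp (-(α₂ * r w)))
        + q₀ * ((q₀ + w * Real.exp (-(α₂ * r w))) ^ β₁ + C))) =ᶠ[nhds v]
      (fun w => (q₀ + w * Real.exp (-(α₂ * r w))) * ((q₀ + w * Real.exp (-(α₂ * r w))) ^ β₁ + C)) :=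
    eventually_of_mem (isOpen_Ioi.mem_nhds hv) (fun w hw => hstar w hw)
  have raw : α₂ * ρ' * (β₁ * C * x + q₀ * (p + C)) + α₂ * r v * (β₁ * C * K + q₀ * (β₁ * qq * K))
      = K * (p + C) + (q₀ + x) * (β₁ * qq * K) :=
    (hL.congr_of_eventuallyEq hLR.symm).unique hR
  have hstarv := hstar v hv
  have hxe : x = v * e := hxdef
  set D := β₁ * C * x + q₀ * (p + C) with hD
  set W := D * (p + C + β₁ * qq * (q₀ + x)) - (q₀ + x) * (p + C) * (β₁ * (C + q₀ * qq)) with hW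
  linear_combination (v * D) * raw - (β₁ * (C + q₀ * qq) * (v * K)) * hstarv
    - ((1 - α₂ * v * ρ') * W) * hxe
    + ((v * e) * (1 - α₂ * v * ρ') * β₁ * (β₁ * C * (v * e))) * hqu

private lemma aux_frac (a g d : ℝ) (ha : 0 < a) (hg : 0 < g) (hd : 0 ≤ d) :
    g / (a * (d + g)) = 1 / a * (1 / (d / g + 1)) := by
  have h1 : 0 < d + g := by linarith
  field_simp
  try ring

theorem statement_9
    (α₂ β₁ q₀ C : ℝ) (hα₂ : 0 < α₂) (hβ₁ : 0 < β₁) (hq₀ : 0 < q₀) (hC : 0 < C)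
    (r : ℝ → ℝ) (hr : ∀ v, 0 < v → 0 < r v)
    (κ η P₀ : ℝ → ℝ)
    (hκ : ∀ v, 0 < v → κ v = v * Real.exp (-(α₂ * r v)))
    (hη : ∀ v, 0 < v → η v = (q₀ + κ v) ^ β₁ / ((q₀ + κ v) ^ β₁ + C))
    (hP₀ : ∀ v, 0 < v → P₀ v = q₀ / (q₀ + κ v))
    (hfoc : ∀ v, 0 < v →
      α₂ * β₁ * r v * (1 - η v) * (1 - P₀ v) + α₂ * r v * P₀ v = 1)
    (hdiff : DifferentiableOn ℝ r (Set.Ioi 0)) :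
    Tendsto (fun v => v * deriv r v) atTop (nhds (1 / α₂)) := by
  have hκpos : ∀ w, 0 < w → 0 < κ w := by
    intro w hw; rw [hκ w hw]; positivity
  -- the first-order condition in cleared form
  have hstar : ∀ w, 0 < w →
      α₂ * r w * (β₁ * C * κ w + q₀ * ((q₀ + κ w) ^ β₁ + C))
        = (q₀ + κ w) * ((q₀ + κ w) ^ β₁ + C) := by
    intro w hw
    have h1 := hfoc w hw
    rw [hη w hw, hP₀ w hw] at h1
    exact aux_star α₂ β₁ q₀ C (κ w) (r w) hq₀ hC (hκpos w hw) h1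
  -- same, written with the explicit formula for κ
  have hstarf : ∀ w, 0 < w → α₂ * r w *
        (β₁ * C * (w * Real.exp (-(α₂ * r w))) + q₀ * ((q₀ + w * Real.exp (-(α₂ * r w))) ^ β₁ + C))
      = (q₀ + w * Real.exp (-(α₂ * r w))) * ((q₀ + w * Real.exp (-(α₂ * r w))) ^ β₁ + C) := by
    intro w hw
    have := hstar w hw
    rwa [hκ w hw] at this
  -- κ tends to infinity
  have hκtop : Tendsto κ atTop atTop := by
    rw [tendsto_atTop]
    intro A
    set B := max A 0 with hB
    have hB0 : 0 ≤ B := le_max_right _ _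
    filter_upwards [eventually_gt_atTop (max 1 (B * Real.exp ((q₀ + B) / q₀)))] with w hwV
    have hw : 0 < w := lt_trans (lt_of_lt_of_le one_pos (le_max_left _ _)) hwV
    by_contra hcon
    push_neg at hcon
    have hκB : κ w ≤ B := le_trans hcon.le (le_max_left _ _)
    -- bound on r
    have hrbd : α₂ * r w * q₀ ≤ q₀ + κ w := by
      have h1 := hstar w hw
      have hp : (0:ℝ) < (q₀ + κ w) ^ β₁ := rpow_pos_of_pos (by linarith [hκpos w hw]) _
      have hpc : (0:ℝ) < (q₀ + κ w) ^ β₁ + C := by linarith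
      have hρ := hr w hw
      have hκw := hκpos w hw
      have h2 : α₂ * r w * (q₀ * ((q₀ + κ w) ^ β₁ + C)) ≤ (q₀ + κ w) * ((q₀ + κ w) ^ β₁ + C) := by
        nlinarith [mul_pos (mul_pos hα₂ hρ) (mul_pos (mul_pos hβ₁ hC) hκw)]
      have h3 := (mul_le_mul_iff_of_pos_right hpc).mp (by linarith [h2] : α₂ * r w * q₀ * ((q₀ + κ w) ^ β₁ + C) ≤ (q₀ + κ w) * ((q₀ + κ w) ^ β₁ + C))
      exact h3
    have hexp : w = κ w * Real.exp (α₂ * r w) := by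
      rw [hκ w hw, mul_assoc, ← Real.exp_add]
      simp
    have hle : w ≤ B * Real.exp ((q₀ + B) / q₀) := by
      rw [hexp]
      have h5 : α₂ * r w ≤ (q₀ + B) / q₀ := by
        rw [le_div_iff₀ hq₀]
        nlinarith
      have := Real.exp_le_exp.mpr h5
      have hκw := (hκpos w hw).le
      calc κ w * Real.exp (α₂ * r w) ≤ B * Real.exp (α₂ * r w) := by
            exact mul_le_mul_of_nonneg_right hκB (Real.exp_pos _).le
        _ ≤ B * Real.exp ((q₀ + B) / q₀) := mul_le_mul_of_nonneg_left this hB0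
    have : w ≤ max 1 (B * Real.exp ((q₀ + B) / q₀)) := le_trans hle (le_max_right _ _)
    linarith [hwV]
  have hptop : Tendsto (fun w => (q₀ + κ w) ^ β₁) atTop atTop :=
    (tendsto_rpow_atTop hβ₁).comp (tendsto_atTop_add_const_left _ q₀ hκtop)
  -- eventual formula for v * r'(v)
  have key : (fun w => w * deriv r w) =ᶠ[atTop] (fun w =>
      κ w * (q₀ * ((q₀ + κ w) ^ β₁ + C) ^ 2 - β₁ * C * q₀ * ((q₀ + κ w) ^ β₁ + C)
          + β₁ ^ 2 * C * (q₀ + κ w) ^ β₁ * κ w)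
        / (α₂ * ((β₁ * C * κ w + q₀ * ((q₀ + κ w) ^ β₁ + C)) ^ 2
          + κ w * (q₀ * ((q₀ + κ w) ^ β₁ + C) ^ 2 - β₁ * C * q₀ * ((q₀ + κ w) ^ β₁ + C)
          + β₁ ^ 2 * C * (q₀ + κ w) ^ β₁ * κ w)))) := by
    filter_upwards [eventually_gt_atTop 0, hptop.eventually_ge_atTop (2 * β₁ * C)]
      with w hw hp2
    have E3 := aux_deriv α₂ β₁ q₀ C w hq₀ hw r hdiff hstarf
    rw [hκ w hw] at hp2 ⊢
    have hx : (0:ℝ) < w * Real.exp (-(α₂ * r w)) := mul_pos hw (exp_pos _)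
    have hM := aux_Mpos β₁ q₀ C ((q₀ + w * Real.exp (-(α₂ * r w))) ^ β₁)
      (w * Real.exp (-(α₂ * r w))) hβ₁ hq₀ hC hx hp2
    have hden : (0:ℝ) < α₂ *
        ((β₁ * C * (w * Real.exp (-(α₂ * r w))) + q₀ * ((q₀ + w * Real.exp (-(α₂ * r w))) ^ β₁ + C)) ^ 2
          + (w * Real.exp (-(α₂ * r w))) *
            (q₀ * ((q₀ + w * Real.exp (-(α₂ * r w))) ^ β₁ + C) ^ 2
              - β₁ * C * q₀ * ((q₀ + w * Real.exp (-(α₂ * r w))) ^ β₁ + C)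
              + β₁ ^ 2 * C * (q₀ + w * Real.exp (-(α₂ * r w))) ^ β₁ * (w * Real.exp (-(α₂ * r w))))) :=
      mul_pos hα₂ (add_pos_of_nonneg_of_pos (sq_nonneg _) (mul_pos hx hM))
    rw [eq_div_iff hden.ne']
    linear_combination E3
  -- limit of the ratio D^2 / (x*M)
  have h0 : Tendsto (fun w =>
      (β₁ * C * κ w + q₀ * ((q₀ + κ w) ^ β₁ + C)) ^ 2
        / (κ w * (q₀ * ((q₀ + κ w) ^ β₁ + C) ^ 2 - β₁ * C * q₀ * ((q₀ + κ w) ^ β₁ + C)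
          + β₁ ^ 2 * C * (q₀ + κ w) ^ β₁ * κ w))) atTop (nhds 0) := by
    have t1 : Tendsto (fun w => (q₀ + κ w) ^ β₁ + C) atTop atTop :=
      tendsto_atTop_add_const_right _ C hptop
    have hupper0 : Tendsto (fun w => 4 * C * ((q₀ + κ w) ^ β₁ + C)⁻¹ + 4 * q₀ * (κ w)⁻¹)
        atTop (nhds 0) := by
      have t2 := (t1.inv_tendsto_atTop).const_mul (4 * C)
      have t3 := (hκtop.inv_tendsto_atTop).const_mul (4 * q₀)
      have := t2.add t3
      simpa using this
    refine tendsto_of_tendsto_of_tendsto_of_le_of_le' tendsto_const_nhds hupper0 ?_ ?_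
    · filter_upwards [eventually_gt_atTop 0, hptop.eventually_ge_atTop (2 * β₁ * C)]
        with w hw hp2
      have hM := aux_Mpos β₁ q₀ C ((q₀ + κ w) ^ β₁) (κ w) hβ₁ hq₀ hC (hκpos w hw) hp2
      exact div_nonneg (sq_nonneg _) (le_of_lt (mul_pos (hκpos w hw) hM))
    · filter_upwards [eventually_gt_atTop 0, hptop.eventually_ge_atTop (2 * β₁ * C),
        hptop.eventually_ge_atTop C] with w hw hp2 hp1
      exact aux_bound β₁ q₀ C ((q₀ + κ w) ^ β₁) (κ w) hβ₁ hq₀ hC (hκpos w hw) hp1 hp2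
  -- rewrite the target ratio
  have hev2 : (fun w =>
      κ w * (q₀ * ((q₀ + κ w) ^ β₁ + C) ^ 2 - β₁ * C * q₀ * ((q₀ + κ w) ^ β₁ + C)
          + β₁ ^ 2 * C * (q₀ + κ w) ^ β₁ * κ w)
        / (α₂ * ((β₁ * C * κ w + q₀ * ((q₀ + κ w) ^ β₁ + C)) ^ 2
          + κ w * (q₀ * ((q₀ + κ w) ^ β₁ + C) ^ 2 - β₁ * C * q₀ * ((q₀ + κ w) ^ β₁ + C)
          + β₁ ^ 2 * C * (q₀ + κ w) ^ β₁ * κ w)))) =ᶠ[atTop] (fun w =>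
      1 / α₂ * (1 / ((β₁ * C * κ w + q₀ * ((q₀ + κ w) ^ β₁ + C)) ^ 2
        / (κ w * (q₀ * ((q₀ + κ w) ^ β₁ + C) ^ 2 - β₁ * C * q₀ * ((q₀ + κ w) ^ β₁ + C)
          + β₁ ^ 2 * C * (q₀ + κ w) ^ β₁ * κ w)) + 1))) := by
    filter_upwards [eventually_gt_atTop 0, hptop.eventually_ge_atTop (2 * β₁ * C)]
      with w hw hp2
    have hM := aux_Mpos β₁ q₀ C ((q₀ + κ w) ^ β₁) (κ w) hβ₁ hq₀ hC (hκpos w hw) hp2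
    exact aux_frac α₂ _ _ hα₂ (mul_pos (hκpos w hw) hM) (sq_nonneg _)
  have hfin : Tendsto (fun w =>
      1 / α₂ * (1 / ((β₁ * C * κ w + q₀ * ((q₀ + κ w) ^ β₁ + C)) ^ 2
        / (κ w * (q₀ * ((q₀ + κ w) ^ β₁ + C) ^ 2 - β₁ * C * q₀ * ((q₀ + κ w) ^ β₁ + C)
          + β₁ ^ 2 * C * (q₀ + κ w) ^ β₁ * κ w)) + 1))) atTop (nhds (1 / α₂)) := by
    have hω := h0.add (tendsto_const_nhds (x := (1:ℝ)))
    have := (tendsto_const_nhds (x := (1:ℝ))).div hω (by norm_num)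
    have h2 := this.const_mul (1 / α₂)
    simpa using h2
  exact Tendsto.congr' (EventuallyEq.symm (key.trans hev2)) hfin
end

section
/- Assume in addition that r is differentiable on (0, +∞). Then there exists v̄₁ > 0 such that for all v > v̄₁ one has r′(v) > 0 (so r is strictly increasing on (v̄₁, +∞)) and α₂·v·r′(v) < 1. -/
open Filter Real

private lemma aux_gderiv (β₁ q₀ C k : ℝ) (hβ₁ : 0 < β₁) (hq₀ : 0 < q₀) (hC : 0 < C)
    (hk : 0 < k) :
    HasDerivAt (fun x => ((q₀ + x) ^ β₁ + C) * (q₀ + x) / (q₀ * ((q₀ + x) ^ β₁ + C) + β₁ * C * x))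
      (((((β₁+1) * (q₀+k) ^ β₁ + C) * (q₀ * ((q₀+k) ^ β₁ + C) + β₁ * C * k))
        - ((q₀+k) ^ β₁ + C) * (q₀+k) * (q₀ * (β₁ * (q₀+k) ^ (β₁-1)) + β₁ * C))
       / (q₀ * ((q₀+k) ^ β₁ + C) + β₁ * C * k)^2) k := by
  have hu : (0:ℝ) < q₀ + k := by linarith
  have hS : (0:ℝ) < (q₀ + k) ^ β₁ := Real.rpow_pos_of_pos hu _
  have hD : (0:ℝ) < q₀ * ((q₀ + k) ^ β₁ + C) + β₁ * C * k := by positivity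
  have hT : (q₀ + k) ^ (β₁ - 1) * (q₀ + k) = (q₀ + k) ^ β₁ := by
    rw [← Real.rpow_add_one hu.ne']; ring_nf
  have hid : HasDerivAt (fun x : ℝ => q₀ + x) 1 k := (hasDerivAt_id k).const_add q₀
  have hS' : HasDerivAt (fun x => (q₀ + x) ^ β₁) (β₁ * (q₀ + k) ^ (β₁ - 1)) k := by
    have h := (Real.hasDerivAt_rpow_const (x := q₀ + k) (p := β₁) (Or.inl hu.ne')).comp k hid
    rw [mul_one] at h
    exact h
  have hN : HasDerivAt (fun x => ((q₀ + x) ^ β₁ + C) * (q₀ + x))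
      ((β₁+1) * (q₀+k) ^ β₁ + C) k := by
    have h := (hS'.add_const C).mul hid
    refine h.congr_deriv ?_
    rw [mul_one]
    nlinarith [hT]
  have hDn : HasDerivAt (fun x => q₀ * ((q₀ + x) ^ β₁ + C) + β₁ * C * x)
      (q₀ * (β₁ * (q₀+k) ^ (β₁-1)) + β₁ * C) k := by
    have h := ((hS'.add_const C).const_mul q₀).add ((hasDerivAt_id k).const_mul (β₁ * C))
    simp only [mul_one] at h
    exact h
  exact hN.div hDn hD.ne'

private lemma aux_numpos (β₁ q₀ C k : ℝ) (hβ₁ : 0 < β₁) (hq₀ : 0 < q₀) (hC : 0 < C) (hk : 0 < k)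
    (hSge : β₁ * C ≤ (q₀ + k) ^ β₁) :
    0 < ((((β₁+1) * (q₀+k) ^ β₁ + C) * (q₀ * ((q₀+k) ^ β₁ + C) + β₁ * C * k))
        - ((q₀+k) ^ β₁ + C) * (q₀+k) * (q₀ * (β₁ * (q₀+k) ^ (β₁-1)) + β₁ * C)) := by
  have hu : (0:ℝ) < q₀ + k := by linarith
  have hS : (0:ℝ) < (q₀ + k) ^ β₁ := Real.rpow_pos_of_pos hu _
  have hT : (q₀ + k) * (q₀ + k) ^ (β₁ - 1) = (q₀ + k) ^ β₁ := by
    rw [mul_comm, ← Real.rpow_add_one hu.ne']; ring_nf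
  set S := (q₀ + k) ^ β₁ with hSdef
  have hid : ((((β₁+1) * S + C) * (q₀ * (S + C) + β₁ * C * k))
        - (S + C) * (q₀+k) * (q₀ * (β₁ * (q₀+k) ^ (β₁-1)) + β₁ * C))
      = q₀ * (S + C) * (S + (1 - β₁) * C) + β₁^2 * C * S * ((q₀ + k) - q₀) := by
    rw [← hT]; ring
  rw [hid]
  have h1 : 0 < S + (1 - β₁) * C := by nlinarith
  nlinarith [mul_pos (mul_pos hq₀ (by linarith : (0:ℝ) < S + C)) h1,
    mul_pos (mul_pos (mul_pos (mul_pos hβ₁ hβ₁) hC) hS) hk]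

theorem statement_10
    (α₂ β₁ q₀ C : ℝ) (hα₂ : 0 < α₂) (hβ₁ : 0 < β₁) (hq₀ : 0 < q₀) (hC : 0 < C)
    (r : ℝ → ℝ) (hr : ∀ v, 0 < v → 0 < r v)
    (κ η P₀ : ℝ → ℝ)
    (hκ : ∀ v, 0 < v → κ v = v * Real.exp (-(α₂ * r v)))
    (hη : ∀ v, 0 < v → η v = (q₀ + κ v) ^ β₁ / ((q₀ + κ v) ^ β₁ + C))
    (hP₀ : ∀ v, 0 < v → P₀ v = q₀ / (q₀ + κ v))
    (hfoc : ∀ v, 0 < v →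
      α₂ * β₁ * r v * (1 - η v) * (1 - P₀ v) + α₂ * r v * P₀ v = 1)
    (hdiff : DifferentiableOn ℝ r (Set.Ioi 0)) :
    ∃ vbar₁ > (0 : ℝ), (∀ v, vbar₁ < v → 0 < deriv r v ∧ α₂ * v * deriv r v < 1) ∧
    StrictMonoOn r (Set.Ioi vbar₁) := by
  have hκpos : ∀ v, 0 < v → 0 < κ v := by
    intro v hv
    rw [hκ v hv]; positivity
  set g : ℝ → ℝ :=
    fun x => ((q₀ + x) ^ β₁ + C) * (q₀ + x) / (q₀ * ((q₀ + x) ^ β₁ + C) + β₁ * C * x)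
    with hgdef
  -- Step A : the FOC gives the explicit formula
  have hA : ∀ v, 0 < v → α₂ * r v = g (κ v) := by
    intro v hv
    have hk := hκpos v hv
    have hu : (0:ℝ) < q₀ + κ v := by linarith
    have hS : (0:ℝ) < (q₀ + κ v) ^ β₁ := Real.rpow_pos_of_pos hu _
    have hD : (0:ℝ) < q₀ * ((q₀ + κ v) ^ β₁ + C) + β₁ * C * κ v := by positivity
    have hfv := hfoc v hv
    rw [hη v hv, hP₀ v hv] at hfv
    rw [hgdef]
    simp only
    rw [eq_div_iff hD.ne']
    field_simp at hfv
    apply mul_right_cancel₀ hu.ne'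
    linear_combination (q₀ + κ v) * hfv
  -- the threshold
  set M : ℝ := (β₁ * C) ^ (1/β₁) with hMdef
  clear_value M
  have hM : 0 < M := by rw [hMdef]; exact Real.rpow_pos_of_pos (mul_pos hβ₁ hC) _
  set vb : ℝ := M * Real.exp ((q₀ + M)/q₀) + 1 with hvbdef
  clear_value vb
  have hvb : 0 < vb := by rw [hvbdef]; positivity
  -- for v > vb, κ v > M
  have hbig : ∀ v, vb < v → M < κ v := by
    intro v hv
    have hv0 : 0 < v := lt_trans hvb hv
    by_contra hcon
    push_neg at hcon
    have hk := hκpos v hv0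
    have hu : (0:ℝ) < q₀ + κ v := by linarith
    have hS : (0:ℝ) < (q₀ + κ v) ^ β₁ := Real.rpow_pos_of_pos hu _
    have hSC : (0:ℝ) < (q₀ + κ v) ^ β₁ + C := by linarith
    have hD : (0:ℝ) < q₀ * ((q₀ + κ v) ^ β₁ + C) + β₁ * C * κ v := by positivity
    have hgle : g (κ v) ≤ (q₀ + κ v) / q₀ := by
      rw [hgdef]; simp only
      have h1 : ((q₀ + κ v) ^ β₁ + C) * (q₀ + κ v) / (q₀ * ((q₀ + κ v) ^ β₁ + C) + β₁ * C * κ v)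
          ≤ ((q₀ + κ v) ^ β₁ + C) * (q₀ + κ v) / (q₀ * ((q₀ + κ v) ^ β₁ + C)) := by
        apply div_le_div_of_nonneg_left (by positivity) (by positivity)
        nlinarith [mul_pos (mul_pos hβ₁ hC) hk]
      calc ((q₀ + κ v) ^ β₁ + C) * (q₀ + κ v) / (q₀ * ((q₀ + κ v) ^ β₁ + C) + β₁ * C * κ v)
          ≤ ((q₀ + κ v) ^ β₁ + C) * (q₀ + κ v) / (q₀ * ((q₀ + κ v) ^ β₁ + C)) := h1
        _ = (q₀ + κ v) / q₀ := by
            rw [mul_comm q₀ _, mul_div_mul_left _ _ hSC.ne']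
    have hrle : α₂ * r v ≤ (q₀ + M) / q₀ := by
      have h2 : (q₀ + κ v) / q₀ ≤ (q₀ + M) / q₀ :=
        div_le_div_of_nonneg_right (by linarith) hq₀.le
      calc α₂ * r v = g (κ v) := hA v hv0
        _ ≤ (q₀ + κ v) / q₀ := hgle
        _ ≤ (q₀ + M) / q₀ := h2
    have hveq : v = κ v * Real.exp (α₂ * r v) := by
      rw [hκ v hv0, mul_assoc, ← Real.exp_add]
      simp
    have : v ≤ M * Real.exp ((q₀ + M)/q₀) := by
      rw [hveq]
      apply mul_le_mul hcon (Real.exp_le_exp.mpr hrle) (Real.exp_pos _).le hM.le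
    rw [hvbdef] at hv
    linarith
  -- main claim
  have hmain : ∀ v, vb < v → 0 < deriv r v ∧ α₂ * v * deriv r v < 1 := by
    intro v hv
    have hv0 : 0 < v := lt_trans hvb hv
    have hkM : M < κ v := hbig v hv
    have hk : 0 < κ v := lt_trans hM hkM
    have hu : (0:ℝ) < q₀ + κ v := by linarith
    have hS : (0:ℝ) < (q₀ + κ v) ^ β₁ := Real.rpow_pos_of_pos hu _
    have hD : (0:ℝ) < q₀ * ((q₀ + κ v) ^ β₁ + C) + β₁ * C * κ v := by positivity
    -- S is large
    have hSge : β₁ * C ≤ (q₀ + κ v) ^ β₁ := by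
      have hlt : M < q₀ + κ v := by linarith
      have h3 : M ^ β₁ < (q₀ + κ v) ^ β₁ := Real.rpow_lt_rpow hM.le hlt hβ₁
      have h4 : M ^ β₁ = β₁ * C := by
        rw [hMdef, ← Real.rpow_mul (mul_pos hβ₁ hC).le, one_div,
          inv_mul_cancel₀ hβ₁.ne', Real.rpow_one]
      linarith [h3, h4.symm.le]
    -- G > 0
    obtain ⟨G, hG, hgd⟩ : ∃ G, 0 < G ∧ HasDerivAt g G (κ v) :=
      ⟨_, div_pos (aux_numpos β₁ q₀ C (κ v) hβ₁ hq₀ hC hk hSge) (by positivity),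
        aux_gderiv β₁ q₀ C (κ v) hβ₁ hq₀ hC hk⟩
    -- derivative of r and κ
    have ha : HasDerivAt r (deriv r v) v :=
      (hdiff.differentiableAt (isOpen_Ioi.mem_nhds hv0)).hasDerivAt
    have hκd : HasDerivAt κ
        (1 * Real.exp (-(α₂ * r v)) + v * (Real.exp (-(α₂ * r v)) * -(α₂ * deriv r v))) v := by
      have h1 : HasDerivAt (fun w => w * Real.exp (-(α₂ * r w)))
          (1 * Real.exp (-(α₂ * r v)) + v * (Real.exp (-(α₂ * r v)) * -(α₂ * deriv r v))) v :=
        (hasDerivAt_id v).mul (((ha.const_mul α₂).neg).exp)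
      apply h1.congr_of_eventuallyEq
      filter_upwards [isOpen_Ioi.mem_nhds hv0] with w hw
      exact hκ w hw
    have hcomp : HasDerivAt (g ∘ κ)
        (G * (1 * Real.exp (-(α₂ * r v)) + v * (Real.exp (-(α₂ * r v)) * -(α₂ * deriv r v)))) v :=
      hgd.comp v hκd
    have hα : HasDerivAt (fun w => α₂ * r w) (α₂ * deriv r v) v := ha.const_mul α₂
    have h2 : HasDerivAt (g ∘ κ) (α₂ * deriv r v) v := by
      apply hα.congr_of_eventuallyEq
      filter_upwards [isOpen_Ioi.mem_nhds hv0] with w hw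
      exact (hA w hw).symm
    have heq : G * (1 * Real.exp (-(α₂ * r v)) + v * (Real.exp (-(α₂ * r v)) * -(α₂ * deriv r v)))
        = α₂ * deriv r v := hcomp.unique h2
    -- algebra
    have hkeq : κ v = v * Real.exp (-(α₂ * r v)) := hκ v hv0
    have hxeq : α₂ * v * deriv r v
        = (G * (v * Real.exp (-(α₂ * r v)))) * (1 - α₂ * v * deriv r v) := by
      linear_combination (-v) * heq
    rw [← hkeq] at hxeq
    have ht : 0 < G * κ v := mul_pos hG hk
    have hxlt : α₂ * v * deriv r v < 1 := by nlinarith [hxeq, ht]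
    have hxpos : 0 < α₂ * v * deriv r v := by nlinarith [hxeq, ht, hxlt]
    refine ⟨?_, hxlt⟩
    by_contra hcon
    push_neg at hcon
    nlinarith [mul_pos hα₂ hv0]
  refine ⟨vb, hvb, hmain, ?_⟩
  apply strictMonoOn_of_deriv_pos (convex_Ioi vb)
  · exact hdiff.continuousOn.mono (fun x hx => lt_trans hvb hx)
  · intro x hx
    rw [interior_Ioi] at hx
    exact (hmain x hx).1
end

section
/- Price convergence theorem: assume in addition that r is differentiable on (0, +∞). Then r(v)/ln(v) tends to 1/α₂ as v tends to +∞. -/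
open Filter Real

set_option maxHeartbeats 1000000 in
theorem statement_11
    (α₂ β₁ q₀ C : ℝ) (hα₂ : 0 < α₂) (hβ₁ : 0 < β₁) (hq₀ : 0 < q₀) (hC : 0 < C)
    (r : ℝ → ℝ) (hr : ∀ v, 0 < v → 0 < r v)
    (κ η P₀ : ℝ → ℝ)
    (hκ : ∀ v, 0 < v → κ v = v * Real.exp (-(α₂ * r v)))
    (hη : ∀ v, 0 < v → η v = (q₀ + κ v) ^ β₁ / ((q₀ + κ v) ^ β₁ + C))
    (hP₀ : ∀ v, 0 < v → P₀ v = q₀ / (q₀ + κ v))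
    (hfoc : ∀ v, 0 < v →
      α₂ * β₁ * r v * (1 - η v) * (1 - P₀ v) + α₂ * r v * P₀ v = 1)
    (hdiff : DifferentiableOn ℝ r (Set.Ioi 0)) :
    Tendsto (fun v => r v / Real.log v) atTop (nhds (1 / α₂)) := by
  -- positivity of κ
  have hκpos : ∀ v, 0 < v → 0 < κ v := by
    intro v hv
    rw [hκ v hv]
    positivity
  -- the FOC in cleared-denominator form
  have key : ∀ v, 0 < v →
      α₂ * r v * (β₁ * C * κ v + q₀ * ((q₀ + κ v) ^ β₁ + C))
        = (q₀ + κ v) * ((q₀ + κ v) ^ β₁ + C) := by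
    intro v hv
    have hk := hκpos v hv
    have hS : 0 < q₀ + κ v := by linarith
    have hE : 0 < (q₀ + κ v) ^ β₁ + C := by positivity
    have h := hfoc v hv
    rw [hη v hv, hP₀ v hv] at h
    field_simp at h
    nlinarith [h, hS.ne', hE.ne']
  -- log κ = log v - α₂ r
  have hlogκ : ∀ v, 0 < v → Real.log (κ v) = Real.log v - α₂ * r v := by
    intro v hv
    rw [hκ v hv, Real.log_mul hv.ne' (Real.exp_pos _).ne', Real.log_exp]
    ring
  set M₀ : ℝ := (q₀ + 1) * ((q₀ + 1) ^ β₁ + C) / (q₀ * C) with hM₀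
  -- eventually κ v > 1
  have hk1 : ∀ v, Real.exp M₀ < v → 1 < κ v := by
    intro v hv
    have hv0 : 0 < v := lt_trans (Real.exp_pos _) hv
    by_contra hle
    push_neg at hle
    have hk := hκpos v hv0
    have hS : 0 < q₀ + κ v := by linarith
    have hS1 : q₀ + κ v ≤ q₀ + 1 := by linarith
    have hrp : (q₀ + κ v) ^ β₁ ≤ (q₀ + 1) ^ β₁ :=
      Real.rpow_le_rpow hS.le hS1 hβ₁.le
    have hrnn : 0 ≤ (q₀ + κ v) ^ β₁ := (Real.rpow_pos_of_pos hS _).le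
    have hD : q₀ * C ≤ β₁ * C * κ v + q₀ * ((q₀ + κ v) ^ β₁ + C) := by
      nlinarith [mul_pos (mul_pos hβ₁ hC) hk, mul_nonneg hq₀.le hrnn]
    have hN : (q₀ + κ v) * ((q₀ + κ v) ^ β₁ + C) ≤ (q₀ + 1) * ((q₀ + 1) ^ β₁ + C) := by
      nlinarith
    have hrv := hr v hv0
    have hbound : α₂ * r v ≤ M₀ := by
      rw [hM₀, le_div_iff₀ (by positivity)]
      calc α₂ * r v * (q₀ * C) ≤ α₂ * r v * (β₁ * C * κ v + q₀ * ((q₀ + κ v) ^ β₁ + C)) := by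
            apply mul_le_mul_of_nonneg_left hD (by positivity)
        _ = (q₀ + κ v) * ((q₀ + κ v) ^ β₁ + C) := key v hv0
        _ ≤ (q₀ + 1) * ((q₀ + 1) ^ β₁ + C) := hN
    have hlogv : M₀ < Real.log v := (Real.lt_log_iff_exp_lt hv0).2 hv
    have : 0 < Real.log (κ v) := by
      rw [hlogκ v hv0]; linarith
    have := (Real.exp_lt_exp.2 this)
    rw [Real.exp_zero, Real.exp_log hk] at this
    linarith
  set m : ℝ := min 1 β₁ with hm
  set p : ℝ := max 1 β₁ with hp
  have hm0 : 0 < m := lt_min one_pos hβ₁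
  set d₁ : ℝ := β₁ * C + q₀ + q₀ * C with hd₁
  have hd₁0 : 0 < d₁ := by positivity
  -- upper bound on log κ
  have hub : ∀ v, Real.exp M₀ < v →
      Real.log (κ v) ≤ (1 / m) * Real.log (d₁ * Real.log v) := by
    intro v hv
    have hv0 : 0 < v := lt_trans (Real.exp_pos _) hv
    have hk := hk1 v hv
    have hS1 : (1 : ℝ) < q₀ + κ v := by linarith
    have hS : 0 < q₀ + κ v := by linarith
    have hrv := hr v hv0
    -- D ≤ d₁ * S^p
    have hSp1 : q₀ + κ v ≤ (q₀ + κ v) ^ p := by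
      nth_rewrite 1 [← Real.rpow_one (q₀ + κ v)]
      exact Real.rpow_le_rpow_of_exponent_le hS1.le (le_max_left _ _)
    have hSpβ : (q₀ + κ v) ^ β₁ ≤ (q₀ + κ v) ^ p :=
      Real.rpow_le_rpow_of_exponent_le hS1.le (le_max_right _ _)
    have hSp0 : (0:ℝ) < (q₀ + κ v) ^ p := Real.rpow_pos_of_pos hS _
    have hSp11 : (1:ℝ) ≤ (q₀ + κ v) ^ p := by
      rw [← Real.rpow_zero (q₀ + κ v)]
      exact Real.rpow_le_rpow_of_exponent_le hS1.le (by positivity)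
    have hD : β₁ * C * κ v + q₀ * ((q₀ + κ v) ^ β₁ + C) ≤ d₁ * (q₀ + κ v) ^ p := by
      have hκS : κ v ≤ q₀ + κ v := by linarith
      have h1 : β₁ * C * κ v ≤ β₁ * C * ((q₀ + κ v) ^ p) :=
        mul_le_mul_of_nonneg_left (hκS.trans hSp1) (by positivity)
      have h2 : q₀ * (q₀ + κ v) ^ β₁ ≤ q₀ * (q₀ + κ v) ^ p :=
        mul_le_mul_of_nonneg_left hSpβ hq₀.le
      have h3 : q₀ * C * 1 ≤ q₀ * C * (q₀ + κ v) ^ p :=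
        mul_le_mul_of_nonneg_left hSp11 (by positivity)
      rw [hd₁]
      nlinarith
    -- N ≥ S^(1+β₁) = S^m * S^p
    have hmp : m + p = 1 + β₁ := min_add_max 1 β₁
    have hN : (q₀ + κ v) ^ m * (q₀ + κ v) ^ p ≤ (q₀ + κ v) * ((q₀ + κ v) ^ β₁ + C) := by
      rw [← Real.rpow_add hS, hmp, Real.rpow_add hS, Real.rpow_one]
      nlinarith [Real.rpow_pos_of_pos hS β₁]
    -- so S^m ≤ α₂ r d₁
    have hstep : (q₀ + κ v) ^ m * (q₀ + κ v) ^ p ≤ α₂ * r v * d₁ * (q₀ + κ v) ^ p := by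
      calc (q₀ + κ v) ^ m * (q₀ + κ v) ^ p
          ≤ (q₀ + κ v) * ((q₀ + κ v) ^ β₁ + C) := hN
        _ = α₂ * r v * (β₁ * C * κ v + q₀ * ((q₀ + κ v) ^ β₁ + C)) := (key v hv0).symm
        _ ≤ α₂ * r v * (d₁ * (q₀ + κ v) ^ p) := by
            apply mul_le_mul_of_nonneg_left hD (by positivity)
        _ = α₂ * r v * d₁ * (q₀ + κ v) ^ p := by ring
    have hSm : (q₀ + κ v) ^ m ≤ α₂ * r v * d₁ :=
      le_of_mul_le_mul_right hstep hSp0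
    -- α₂ r ≤ log v
    have hlk : 0 < Real.log (κ v) := Real.log_pos hk
    have hα₂r : α₂ * r v ≤ Real.log v := by
      have := hlogκ v hv0; linarith
    have hlogv0 : 0 < Real.log v := by
      have := hlogκ v hv0
      nlinarith [hr v hv0]
    have hkm : (κ v) ^ m ≤ d₁ * Real.log v := by
      calc (κ v) ^ m ≤ (q₀ + κ v) ^ m :=
            Real.rpow_le_rpow (by linarith) (by linarith) hm0.le
        _ ≤ α₂ * r v * d₁ := hSm
        _ ≤ d₁ * Real.log v := by nlinarith
    have hkm0 : (0:ℝ) < (κ v) ^ m := Real.rpow_pos_of_pos (by linarith) _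
    have hlog : m * Real.log (κ v) ≤ Real.log (d₁ * Real.log v) := by
      have := Real.log_le_log hkm0 hkm
      rwa [Real.log_rpow (by linarith)] at this
    calc Real.log (κ v) = (1/m) * (m * Real.log (κ v)) := by
          rw [one_div, inv_mul_cancel_left₀ hm0.ne']
      _ ≤ (1/m) * Real.log (d₁ * Real.log v) := by
          apply mul_le_mul_of_nonneg_left hlog (by positivity)
  -- log κ / log v → 0
  have hRHS : Tendsto (fun v => (1 / m) * Real.log (d₁ * Real.log v) / Real.log v)
      atTop (nhds 0) := by
    have h1 : Tendsto (fun x : ℝ => Real.log (d₁ * x) / x) atTop (nhds 0) := by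
      have h2 : Tendsto (fun x : ℝ => Real.log d₁ / x + Real.log x / x) atTop (nhds 0) := by
        have := (tendsto_const_nhds.div_atTop tendsto_id :
          Tendsto (fun x : ℝ => Real.log d₁ / x) atTop (nhds 0))
        have h3 := Real.tendsto_pow_log_div_mul_add_atTop 1 0 1 one_ne_zero
        simp only [pow_one, one_mul, add_zero] at h3
        simpa using this.add h3
      refine h2.congr' ?_
      filter_upwards [eventually_gt_atTop (0 : ℝ)] with x hx
      rw [Real.log_mul hd₁0.ne' hx.ne']
      ring
    have h4 := (h1.comp Real.tendsto_log_atTop).const_mul (1 / m)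
    simp only [mul_zero] at h4
    refine h4.congr ?_
    intro x; simp [Function.comp]; ring
  have hmain : Tendsto (fun v => Real.log (κ v) / Real.log v) atTop (nhds 0) := by
    apply tendsto_of_tendsto_of_tendsto_of_le_of_le' tendsto_const_nhds hRHS
    · filter_upwards [eventually_gt_atTop (Real.exp M₀), eventually_gt_atTop (1:ℝ)]
        with v hv hv1
      have hlk : 0 < Real.log (κ v) := Real.log_pos (hk1 v hv)
      have hlv : 0 < Real.log v := Real.log_pos hv1
      exact div_nonneg hlk.le hlv.le
    · filter_upwards [eventually_gt_atTop (Real.exp M₀), eventually_gt_atTop (1:ℝ)]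
        with v hv hv1
      have hlv : 0 < Real.log v := Real.log_pos hv1
      gcongr
      exact hub v hv
  -- conclude
  have hfin : Tendsto (fun v => 1 / α₂ - (1 / α₂) * (Real.log (κ v) / Real.log v))
      atTop (nhds (1 / α₂)) := by
    have := (hmain.const_mul (1 / α₂)).const_sub (1 / α₂)
    simpa using this
  refine hfin.congr' ?_
  filter_upwards [eventually_gt_atTop (Real.exp M₀), eventually_gt_atTop (1:ℝ)]
    with v hv hv1
  have hv0 : (0:ℝ) < v := by linarith
  have hlv : 0 < Real.log v := Real.log_pos hv1
  have h := hlogκ v hv0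
  rw [h]
  field_simp
  ring
end

section
/- Assume in addition that r is differentiable on (0, +∞). Then there exists v̄ > 0 such that the operational profit Π is strictly increasing on (v̄, +∞). -/
open Real

lemma aux_fmono {α₂ β₁ q₀ C : ℝ} (hα₂ : 0 < α₂) (hβ₁ : 0 < β₁) (hq₀ : 0 < q₀) (hC : 0 < C) :
    StrictMonoOn (fun x : ℝ => (q₀ + x) ^ β₁ * x / (α₂ * (β₁ * C * x + q₀ * ((q₀ + x) ^ β₁ + C))))
      (Set.Ioi 0) := by
  intro x₁ hx₁ x₂ hx₂ hlt
  simp only [Set.mem_Ioi] at hx₁ hx₂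
  have hb₁ : (0:ℝ) < q₀ + x₁ := by linarith
  have hb₂ : (0:ℝ) < q₀ + x₂ := by linarith
  have hS₁ : 0 < (q₀ + x₁) ^ β₁ := Real.rpow_pos_of_pos hb₁ _
  have hS₂ : 0 < (q₀ + x₂) ^ β₁ := Real.rpow_pos_of_pos hb₂ _
  have hSlt : (q₀ + x₁) ^ β₁ < (q₀ + x₂) ^ β₁ :=
    Real.rpow_lt_rpow hb₁.le (by linarith) hβ₁
  have hD₁ : 0 < α₂ * (β₁ * C * x₁ + q₀ * ((q₀ + x₁) ^ β₁ + C)) := by positivity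
  have hD₂ : 0 < α₂ * (β₁ * C * x₂ + q₀ * ((q₀ + x₂) ^ β₁ + C)) := by positivity
  simp only []
  rw [div_lt_div_iff₀ hD₁ hD₂]
  nlinarith [mul_pos (mul_pos (mul_pos hβ₁ hC) (mul_pos hx₁ hx₂)) (sub_pos.mpr hSlt),
    mul_pos (mul_pos (mul_pos hq₀ hS₁) hS₂) (sub_pos.mpr hlt),
    mul_pos (mul_pos hq₀ hC) (sub_pos.mpr (mul_lt_mul hSlt hlt.le hx₁ hS₂.le)),
    hα₂.le, mul_pos hα₂ (mul_pos (mul_pos (mul_pos hβ₁ hC) (mul_pos hx₁ hx₂)) (sub_pos.mpr hSlt)),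
    mul_pos hα₂ (mul_pos (mul_pos (mul_pos hq₀ hS₁) hS₂) (sub_pos.mpr hlt)),
    mul_pos hα₂ (mul_pos (mul_pos hq₀ hC) (sub_pos.mpr (mul_lt_mul hSlt hlt.le hx₁ hS₂.le)))]

lemma aux_hmono {β₁ q₀ C : ℝ} (hβ₁ : 0 < β₁) (hq₀ : 0 < q₀) (hC : 0 < C) :
    StrictMonoOn (fun x : ℝ => x * Real.exp (((q₀ + x) ^ β₁ + C) * (q₀ + x) /
      (β₁ * C * x + q₀ * ((q₀ + x) ^ β₁ + C)))) (Set.Ioi 0) := by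
  have main : ∀ x ∈ Set.Ioi (0:ℝ), ∃ d, 0 < d ∧ HasDerivAt (fun x : ℝ => x * Real.exp (((q₀ + x) ^ β₁ + C) * (q₀ + x) /
      (β₁ * C * x + q₀ * ((q₀ + x) ^ β₁ + C)))) d x := by
    intro x hx
    simp only [Set.mem_Ioi] at hx
    have hb : (0:ℝ) < q₀ + x := by linarith
    have hS : 0 < (q₀ + x) ^ β₁ := Real.rpow_pos_of_pos hb _
    have hT : 0 < (q₀ + x) ^ (β₁ - 1) := Real.rpow_pos_of_pos hb _
    have hTS : (q₀ + x) ^ (β₁ - 1) * (q₀ + x) = (q₀ + x) ^ β₁ := by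
      rw [← Real.rpow_add_one hb.ne' (β₁ - 1)]; ring_nf
    have hD0 : 0 < β₁ * C * x + q₀ * ((q₀ + x) ^ β₁ + C) := by positivity
    have hid : HasDerivAt (fun y : ℝ => q₀ + y) 1 x := by
      simpa using (hasDerivAt_id x).const_add q₀
    have hSd : HasDerivAt (fun y : ℝ => (q₀ + y) ^ β₁) (1 * β₁ * (q₀ + x) ^ (β₁ - 1)) x :=
      hid.rpow_const (Or.inl hb.ne')
    have hNd : HasDerivAt (fun y : ℝ => ((q₀ + y) ^ β₁ + C) * (q₀ + y))
        ((1 * β₁ * (q₀ + x) ^ (β₁ - 1)) * (q₀ + x) + ((q₀ + x) ^ β₁ + C) * 1) x :=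
      (hSd.add_const C).mul hid
    have hDd : HasDerivAt (fun y : ℝ => β₁ * C * y + q₀ * ((q₀ + y) ^ β₁ + C))
        (β₁ * C * 1 + q₀ * (1 * β₁ * (q₀ + x) ^ (β₁ - 1))) x :=
      ((hasDerivAt_id x).const_mul (β₁ * C)).add ((hSd.add_const C).const_mul q₀)
    have hgd := hNd.div hDd hD0.ne'
    have hFd := (hasDerivAt_id x).mul hgd.exp
    refine ⟨_, ?_, hFd⟩
    set S := (q₀ + x) ^ β₁ with hSdef
    set T := (q₀ + x) ^ (β₁ - 1) with hTdef
    set Dx := β₁ * C * x + q₀ * (S + C) with hDdef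
    have hE : 0 < Dx ^ 2 + x * (((1 * β₁ * T) * (q₀ + x) + (S + C) * 1) * Dx
        - ((S + C) * (q₀ + x)) * (β₁ * C * 1 + q₀ * (1 * β₁ * T))) := by
      have hid2 : Dx ^ 2 + x * (((1 * β₁ * T) * (q₀ + x) + (S + C) * 1) * Dx
          - ((S + C) * (q₀ + x)) * (β₁ * C * 1 + q₀ * (1 * β₁ * T)))
          = β₁^2*C^2*x^2 + q₀^2*S^2 + q₀^2*C^2 + 2*q₀^2*C*S
            + (β₁+2)*q₀*C*S*x + (β₁+1)*q₀*C^2*x + β₁^2*C*S*x^2 + q₀*S^2*x := by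
        rw [hDdef]
        linear_combination (β₁^2*C*x^2) * hTS
      rw [hid2]; positivity
    have hrw : 1 * Real.exp ((S + C) * (q₀ + x) / Dx) + x * (Real.exp ((S + C) * (q₀ + x) / Dx) *
        ((((1 * β₁ * T) * (q₀ + x) + (S + C) * 1) * Dx - ((S + C) * (q₀ + x)) * (β₁ * C * 1 + q₀ * (1 * β₁ * T))) / Dx ^ 2))
        = Real.exp ((S + C) * (q₀ + x) / Dx) * ((Dx ^ 2 + x * (((1 * β₁ * T) * (q₀ + x) + (S + C) * 1) * Dx
          - ((S + C) * (q₀ + x)) * (β₁ * C * 1 + q₀ * (1 * β₁ * T)))) / Dx ^ 2) := by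
      field_simp
    simp only [id_eq]
    refine lt_of_lt_of_eq ?_ hrw.symm
    exact mul_pos (Real.exp_pos _) (div_pos hE (by positivity))
  apply strictMonoOn_of_deriv_pos (convex_Ioi 0)
  · intro x hx
    obtain ⟨d, _, hd⟩ := main x hx
    exact hd.differentiableAt.continuousAt.continuousWithinAt
  · intro x hx
    rw [interior_Ioi] at hx
    obtain ⟨d, hdpos, hd⟩ := main x hx
    rw [hd.deriv]
    exact hdpos


theorem statement_13
    (α₂ β₁ q₀ C : ℝ) (hα₂ : 0 < α₂) (hβ₁ : 0 < β₁) (hq₀ : 0 < q₀) (hC : 0 < C)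
    (r : ℝ → ℝ) (hr : ∀ v, 0 < v → 0 < r v)
    (κ η P₀ : ℝ → ℝ)
    (hκ : ∀ v, 0 < v → κ v = v * Real.exp (-(α₂ * r v)))
    (hη : ∀ v, 0 < v → η v = (q₀ + κ v) ^ β₁ / ((q₀ + κ v) ^ β₁ + C))
    (hP₀ : ∀ v, 0 < v → P₀ v = q₀ / (q₀ + κ v))
    (hfoc : ∀ v, 0 < v →
      α₂ * β₁ * r v * (1 - η v) * (1 - P₀ v) + α₂ * r v * P₀ v = 1)
    (hdiff : DifferentiableOn ℝ r (Set.Ioi 0))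
    (Prof : ℝ → ℝ) (hProf : ∀ v, 0 < v → Prof v = r v * η v * (1 - P₀ v)) :
    ∃ vbar > (0 : ℝ), StrictMonoOn Prof (Set.Ioi vbar) := by
  have key : ∀ v, 0 < v → 0 < κ v ∧
      Prof v = (q₀ + κ v) ^ β₁ * κ v / (α₂ * (β₁ * C * κ v + q₀ * ((q₀ + κ v) ^ β₁ + C))) ∧
      v = κ v * Real.exp (((q₀ + κ v) ^ β₁ + C) * (q₀ + κ v) /
        (β₁ * C * κ v + q₀ * ((q₀ + κ v) ^ β₁ + C))) := by
    intro v hv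
    have hrv := hr v hv
    have hx : 0 < κ v := by rw [hκ v hv]; positivity
    have hb : (0:ℝ) < q₀ + κ v := by linarith
    have hS : 0 < (q₀ + κ v) ^ β₁ := Real.rpow_pos_of_pos hb _
    have hSC : 0 < (q₀ + κ v) ^ β₁ + C := by linarith
    have hD : 0 < β₁ * C * κ v + q₀ * ((q₀ + κ v) ^ β₁ + C) := by positivity
    have hrel : α₂ * r v * (β₁ * C * κ v + q₀ * ((q₀ + κ v) ^ β₁ + C))
        = ((q₀ + κ v) ^ β₁ + C) * (q₀ + κ v) := by
      have h := hfoc v hv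
      rw [hη v hv, hP₀ v hv] at h
      field_simp at h
      have h2 : (q₀ + κ v) * (α₂ * r v * (β₁ * C * κ v + q₀ * ((q₀ + κ v) ^ β₁ + C)))
          = (q₀ + κ v) * (((q₀ + κ v) ^ β₁ + C) * (q₀ + κ v)) := by linear_combination (q₀ + κ v) * h
      exact mul_left_cancel₀ hb.ne' h2
    refine ⟨hx, ?_, ?_⟩
    · rw [hProf v hv, hη v hv, hP₀ v hv]
      rw [eq_div_iff (by positivity)]
      field_simp
      linear_combination (κ v) * hrel
    · have h1 : α₂ * r v = ((q₀ + κ v) ^ β₁ + C) * (q₀ + κ v) /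
          (β₁ * C * κ v + q₀ * ((q₀ + κ v) ^ β₁ + C)) := by
        rw [eq_div_iff hD.ne']; linear_combination hrel
      rw [← h1, hκ v hv, mul_assoc, ← Real.exp_add]
      rw [neg_add_cancel, Real.exp_zero, mul_one]
  refine ⟨1, one_pos, ?_⟩
  intro v₁ hv₁ v₂ hv₂ hlt
  simp only [Set.mem_Ioi] at hv₁ hv₂
  have hv₁0 : (0:ℝ) < v₁ := lt_trans one_pos hv₁
  have hv₂0 : (0:ℝ) < v₂ := lt_trans one_pos hv₂
  obtain ⟨hx₁, hp₁, hh₁⟩ := key v₁ hv₁0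
  obtain ⟨hx₂, hp₂, hh₂⟩ := key v₂ hv₂0
  have hxlt : κ v₁ < κ v₂ := by
    have := (aux_hmono hβ₁ hq₀ hC).lt_iff_lt (Set.mem_Ioi.mpr hx₁) (Set.mem_Ioi.mpr hx₂)
    rw [← this]
    rw [← hh₁, ← hh₂]
    exact hlt
  rw [hp₁, hp₂]
  exact aux_fmono hα₂ hβ₁ hq₀ hC (Set.mem_Ioi.mpr hx₁) (Set.mem_Ioi.mpr hx₂) hxlt
end

section
/- Assume in addition that r is twice differentiable on (0, +∞). Then v²·r″(v) tends to −1/α₂ as v tends to +∞. -/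
set_option maxHeartbeats 1000000
open Filter Real

noncomputable section S14aux

/-- X t = (q₀+t)^β₁ -/
def Xf (β₁ q₀ t : ℝ) : ℝ := (q₀ + t) ^ β₁

def Df (β₁ q₀ C t : ℝ) : ℝ := q₀ * Xf β₁ q₀ t + q₀ * C + β₁ * C * t

def Ef (β₁ q₀ C t : ℝ) : ℝ :=
  q₀ * Xf β₁ q₀ t * Xf β₁ q₀ t + β₁ ^ 2 * C * t * Xf β₁ q₀ t
    + q₀ * C * (2 - β₁) * Xf β₁ q₀ t + q₀ * C ^ 2 * (1 - β₁)

def phif (β₁ q₀ C t : ℝ) : ℝ := (q₀ + t) * (Xf β₁ q₀ t + C) / Df β₁ q₀ C t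

def Af (β₁ q₀ C t : ℝ) : ℝ := t * Ef β₁ q₀ C t / (Df β₁ q₀ C t) ^ 2

def Xd (β₁ q₀ t : ℝ) : ℝ := β₁ * Xf β₁ q₀ t / (q₀ + t)

def Dd (β₁ q₀ C t : ℝ) : ℝ := q₀ * Xd β₁ q₀ t + β₁ * C

def Ed (β₁ q₀ C t : ℝ) : ℝ :=
  2 * q₀ * Xf β₁ q₀ t * Xd β₁ q₀ t + β₁ ^ 2 * C * (Xf β₁ q₀ t + t * Xd β₁ q₀ t)
    + q₀ * C * (2 - β₁) * Xd β₁ q₀ t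

def Ad (β₁ q₀ C t : ℝ) : ℝ :=
  (Ef β₁ q₀ C t + t * Ed β₁ q₀ C t) / (Df β₁ q₀ C t) ^ 2
    - 2 * t * Ef β₁ q₀ C t * Dd β₁ q₀ C t / (Df β₁ q₀ C t) ^ 3

def Ff (β₁ q₀ C t : ℝ) : ℝ :=
  t * Ad β₁ q₀ C t / (1 + Af β₁ q₀ C t) ^ 3 - Af β₁ q₀ C t / (1 + Af β₁ q₀ C t)

variable {β₁ q₀ C : ℝ}

lemma Xf_pos (hq₀ : 0 < q₀) {t : ℝ} (ht : 0 ≤ t) : 0 < Xf β₁ q₀ t :=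
  Real.rpow_pos_of_pos (by linarith) _

lemma Df_pos (hβ₁ : 0 < β₁) (hq₀ : 0 < q₀) (hC : 0 < C) {t : ℝ} (ht : 0 ≤ t) :
    0 < Df β₁ q₀ C t := by
  have := Xf_pos (β₁ := β₁) hq₀ ht
  have : 0 < q₀ * Xf β₁ q₀ t := by positivity
  have h2 : 0 < q₀ * C := by positivity
  have h3 : 0 ≤ β₁ * C * t := by positivity
  unfold Df; linarith

lemma hasDerivAt_Xf (hq₀ : 0 < q₀) {t : ℝ} (ht : 0 ≤ t) :
    HasDerivAt (fun s => Xf β₁ q₀ s) (Xd β₁ q₀ t) t := by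
  have hx : (0:ℝ) < q₀ + t := by linarith
  have h1 : HasDerivAt (fun s : ℝ => q₀ + s) 1 t := by
    simpa using (hasDerivAt_id t).const_add q₀
  have h2 : HasDerivAt (fun x : ℝ => x ^ β₁) (β₁ * (q₀ + t) ^ (β₁ - 1)) (q₀ + t) :=
    Real.hasDerivAt_rpow_const (Or.inl hx.ne')
  have := h2.comp t h1
  simp only [mul_one] at this
  refine this.congr_deriv ?_
  rw [Real.rpow_sub_one hx.ne']
  unfold Xd Xf; ring

lemma hasDerivAt_Df (hq₀ : 0 < q₀) {t : ℝ} (ht : 0 ≤ t) :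
    HasDerivAt (fun s => Df β₁ q₀ C s) (Dd β₁ q₀ C t) t := by
  have hX := hasDerivAt_Xf (β₁ := β₁) hq₀ ht
  have h := ((hX.const_mul q₀).add_const (q₀ * C)).add
    (((hasDerivAt_id t).const_mul (β₁ * C)))
  exact h.congr_deriv (by unfold Dd; ring)

lemma hasDerivAt_Ef (hq₀ : 0 < q₀) {t : ℝ} (ht : 0 ≤ t) :
    HasDerivAt (fun s => Ef β₁ q₀ C s) (Ed β₁ q₀ C t) t := by
  have hX := hasDerivAt_Xf (β₁ := β₁) hq₀ ht
  have h1 : HasDerivAt (fun s => q₀ * Xf β₁ q₀ s * Xf β₁ q₀ s)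
      (q₀ * Xd β₁ q₀ t * Xf β₁ q₀ t + q₀ * Xf β₁ q₀ t * Xd β₁ q₀ t) t :=
    (hX.const_mul q₀).mul hX
  have h2 : HasDerivAt (fun s => β₁ ^ 2 * C * s * Xf β₁ q₀ s)
      (β₁ ^ 2 * C * Xf β₁ q₀ t + β₁ ^ 2 * C * t * Xd β₁ q₀ t) t := by
    have := ((hasDerivAt_id t).const_mul (β₁ ^ 2 * C)).mul hX
    exact this.congr_deriv (by simp only [id]; ring)
  have h3 : HasDerivAt (fun s => q₀ * C * (2 - β₁) * Xf β₁ q₀ s)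
      (q₀ * C * (2 - β₁) * Xd β₁ q₀ t) t := hX.const_mul _
  have h := ((h1.add h2).add h3).add_const (q₀ * C ^ 2 * (1 - β₁))
  refine h.congr_deriv ?_
  unfold Ed; ring

lemma hasDerivAt_phif (hβ₁ : 0 < β₁) (hq₀ : 0 < q₀) (hC : 0 < C) {t : ℝ} (ht : 0 ≤ t) :
    HasDerivAt (fun s => phif β₁ q₀ C s)
      (Ef β₁ q₀ C t / (Df β₁ q₀ C t) ^ 2) t := by
  have hx : (0:ℝ) < q₀ + t := by linarith
  have hX := hasDerivAt_Xf (β₁ := β₁) hq₀ ht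
  have hD := hasDerivAt_Df (β₁ := β₁) (C := C) hq₀ ht
  have hDne := (Df_pos hβ₁ hq₀ hC ht).ne'
  have hN : HasDerivAt (fun s => (q₀ + s) * (Xf β₁ q₀ s + C))
      (1 * (Xf β₁ q₀ t + C) + (q₀ + t) * Xd β₁ q₀ t) t := by
    have h1 : HasDerivAt (fun s : ℝ => q₀ + s) 1 t := by
      simpa using (hasDerivAt_id t).const_add q₀
    exact h1.mul (hX.add_const C)
  have h := hN.div hD hDne
  refine h.congr_deriv ?_
  have hnum : Ef β₁ q₀ C t =
      (1 * (Xf β₁ q₀ t + C) + (q₀ + t) * Xd β₁ q₀ t) * Df β₁ q₀ C t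
        - (q₀ + t) * (Xf β₁ q₀ t + C) * Dd β₁ q₀ C t := by
    unfold Ef Df Dd Xd
    field_simp
    ring
  rw [hnum]
lemma hasDerivAt_Af (hβ₁ : 0 < β₁) (hq₀ : 0 < q₀) (hC : 0 < C) {t : ℝ} (ht : 0 ≤ t) :
    HasDerivAt (fun s => Af β₁ q₀ C s) (Ad β₁ q₀ C t) t := by
  have hDne := (Df_pos hβ₁ hq₀ hC ht).ne'
  have hE := hasDerivAt_Ef (β₁ := β₁) (C := C) hq₀ ht
  have hD := hasDerivAt_Df (β₁ := β₁) (C := C) hq₀ ht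
  have hN : HasDerivAt (fun s => s * Ef β₁ q₀ C s)
      (1 * Ef β₁ q₀ C t + t * Ed β₁ q₀ C t) t := (hasDerivAt_id t).mul hE
  have hD2 : HasDerivAt (fun s => (Df β₁ q₀ C s) ^ 2)
      (2 * Df β₁ q₀ C t * Dd β₁ q₀ C t) t := by
    have := hD.pow 2
    norm_num at this
    exact this
  have hD2ne : (Df β₁ q₀ C t) ^ 2 ≠ 0 := pow_ne_zero _ hDne
  have h := hN.div hD2 hD2ne
  refine h.congr_deriv ?_
  unfold Ad
  field_simp

lemma hX_tendsto (hβ₁ : 0 < β₁) (hq₀ : 0 < q₀) :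
    Tendsto (fun t => Xf β₁ q₀ t) atTop atTop := by
  have h1 : Tendsto (fun t : ℝ => q₀ + t) atTop atTop :=
    tendsto_atTop_add_const_left _ q₀ tendsto_id
  exact (tendsto_rpow_atTop hβ₁).comp h1

/-- Eventually `E` dominates half the main terms. -/
lemma hE_lower (hβ₁ : 0 < β₁) (hq₀ : 0 < q₀) (hC : 0 < C) :
    ∀ᶠ t in atTop, (q₀ * Xf β₁ q₀ t * Xf β₁ q₀ t + β₁ ^ 2 * C * t * Xf β₁ q₀ t) / 2
      ≤ Ef β₁ q₀ C t := by
  filter_upwards [(hX_tendsto hβ₁ hq₀).eventually_ge_atTop (1 + 4 * C * β₁ + 4 * C ^ 2 * β₁),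
    eventually_ge_atTop (1:ℝ)] with t hX ht
  have hXpos : 0 < Xf β₁ q₀ t := Xf_pos hq₀ (by linarith)
  set X := Xf β₁ q₀ t with hXdef
  have hX1 : 1 ≤ X := by nlinarith
  have hX2 : 4 * C * β₁ ≤ X := by nlinarith
  have hX3 : 4 * C ^ 2 * β₁ ≤ X := by nlinarith
  have ha : q₀ * C * β₁ * X ≤ q₀ * (X * X) / 4 := by nlinarith [mul_le_mul_of_nonneg_left hX2 (by positivity : (0:ℝ) ≤ q₀ * X / 4)]
  have hb : q₀ * C ^ 2 * β₁ ≤ q₀ * (X * X) / 4 := by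
    have hXX : X ≤ X * X := by nlinarith
    nlinarith [mul_le_mul_of_nonneg_left (hX3.trans hXX) (by positivity : (0:ℝ) ≤ q₀ / 4)]
  have hc : 0 ≤ β₁ ^ 2 * C * t * X := by positivity
  have hd : 0 ≤ q₀ * C * X := by positivity
  have he : 0 ≤ q₀ * C ^ 2 := by positivity
  unfold Ef
  rw [← hXdef]
  nlinarith [ha, hb, hc, hd, he]
lemma hZ_tendsto (hβ₁ : 0 < β₁) (hq₀ : 0 < q₀) (hC : 0 < C) :
    Tendsto (fun t => (Df β₁ q₀ C t) ^ 2 / (t * Ef β₁ q₀ C t)) atTop (nhds 0) := by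
  set Bnd : ℝ → ℝ := fun t => 6 * q₀ / t + 6 * (q₀ * C ^ 2 + C) / Xf β₁ q₀ t with hBnd
  have hBnd0 : Tendsto Bnd atTop (nhds 0) := by
    have h1 : Tendsto (fun t : ℝ => 6 * q₀ / t) atTop (nhds 0) :=
      tendsto_const_nhds.div_atTop tendsto_id
    have h2 : Tendsto (fun t => 6 * (q₀ * C ^ 2 + C) / Xf β₁ q₀ t) atTop (nhds 0) :=
      tendsto_const_nhds.div_atTop (hX_tendsto hβ₁ hq₀)
    simpa using h1.add h2
  apply tendsto_of_tendsto_of_tendsto_of_le_of_le' tendsto_const_nhds hBnd0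
  · filter_upwards [hE_lower hβ₁ hq₀ hC, eventually_ge_atTop (1:ℝ),
      (hX_tendsto hβ₁ hq₀).eventually_ge_atTop 1] with t hE ht hX
    have hXpos : 0 < Xf β₁ q₀ t := by linarith
    have hEpos : 0 < Ef β₁ q₀ C t := by
      refine lt_of_lt_of_le ?_ hE
      have := Xf_pos (β₁ := β₁) hq₀ (le_trans zero_le_one ht)
      positivity
    positivity
  · filter_upwards [hE_lower hβ₁ hq₀ hC, eventually_ge_atTop (1:ℝ),
      eventually_ge_atTop q₀, (hX_tendsto hβ₁ hq₀).eventually_ge_atTop 1,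
      (hX_tendsto hβ₁ hq₀).eventually_ge_atTop (1/q₀)] with t hE ht htq hX hXq
    set X := Xf β₁ q₀ t with hXdef
    have ht0 : (0:ℝ) < t := by linarith
    have hXpos : (0:ℝ) < X := by linarith
    have hq₀X : 1 ≤ q₀ * X := by
      have := (div_le_iff₀ hq₀).mp hXq
      linarith [mul_comm X q₀]
    have hS : 0 < q₀ * X * X + β₁ ^ 2 * C * t * X := by positivity
    have hEpos : 0 < Ef β₁ q₀ C t := lt_of_lt_of_le (by linarith) hE
    have htE : 0 < t * Ef β₁ q₀ C t := by positivity
    have htX : (0:ℝ) < t * X := by positivity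
    rw [div_le_iff₀ htE, hBnd]
    have p1 : 2*(q₀^2*C*X) ≤ q₀^2*X^2 + q₀^2*C^2 := by nlinarith [sq_nonneg (q₀*X - q₀*C)]
    have p2 : 2*(q₀*β₁*C*t*X) ≤ q₀*β₁^2*C*t*X + q₀*C*t*X := by
      nlinarith [mul_nonneg (mul_nonneg (mul_nonneg hq₀.le hC.le) ht0.le) hXpos.le, sq_nonneg (β₁ - 1)]
    have p3 : 2*(q₀*β₁*C^2*t) ≤ q₀*β₁^2*C^2*t + q₀*C^2*t := by
      nlinarith [mul_nonneg (mul_nonneg hq₀.le (sq_nonneg C)) ht0.le, sq_nonneg (β₁ - 1)]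
    have p4 : q₀^2*C^2 ≤ q₀^2*C^2*(t*X) := by
      nlinarith [mul_nonneg (sq_nonneg q₀) (sq_nonneg C), mul_le_mul ht hX zero_le_one ht0.le]
    have p5 : q₀*β₁^2*C^2*t ≤ β₁^2*C^2*t^2 := by
      nlinarith [mul_nonneg (mul_nonneg (sq_nonneg β₁) (sq_nonneg C)) ht0.le]
    have p6 : q₀*C^2*t ≤ q₀^2*C^2*(t*X) := by
      nlinarith [mul_nonneg (mul_nonneg (mul_nonneg hq₀.le (sq_nonneg C)) ht0.le) (by linarith : (0:ℝ) ≤ q₀*X - 1)]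
    have n1 : (0:ℝ) ≤ q₀*β₁^2*C^3*t^2 := by positivity
    have n2 : (0:ℝ) ≤ q₀^2*X^2 := by positivity
    have n3 : (0:ℝ) ≤ q₀*β₁^2*C*t*X := by positivity
    have n4 : (0:ℝ) ≤ q₀*C*t*X := by positivity
    have n5 : (0:ℝ) ≤ β₁^2*C^2*t^2 := by positivity
    have key0 : (q₀*X + q₀*C + β₁*C*t)^2
        ≤ (3*q₀*X + 3*(q₀*C^2 + C)*t) * (q₀*X + β₁^2*C*t) := by
      linarith [p1, p2, p3, p4, p5, p6, n1, n2, n3, n4, n5]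
    have key : (Df β₁ q₀ C t) ^ 2 * (t * X)
        ≤ (6 * q₀ * X + 6 * (q₀ * C ^ 2 + C) * t) * (t * ((q₀ * X * X + β₁ ^ 2 * C * t * X) / 2)) := by
      have hD : Df β₁ q₀ C t = q₀ * X + q₀ * C + β₁ * C * t := rfl
      rw [hD]
      calc (q₀*X + q₀*C + β₁*C*t)^2 * (t*X)
          ≤ ((3*q₀*X + 3*(q₀*C^2 + C)*t) * (q₀*X + β₁^2*C*t)) * (t*X) :=
            mul_le_mul_of_nonneg_right key0 htX.le
        _ = (6 * q₀ * X + 6 * (q₀ * C ^ 2 + C) * t) * (t * ((q₀ * X * X + β₁ ^ 2 * C * t * X) / 2)) := by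
            ring
    have key2 : (Df β₁ q₀ C t) ^ 2 * (t * X)
        ≤ (6 * q₀ * X + 6 * (q₀ * C ^ 2 + C) * t) * (t * Ef β₁ q₀ C t) := by
      refine key.trans ?_
      have h6 : (0:ℝ) ≤ 6 * q₀ * X + 6 * (q₀ * C ^ 2 + C) * t := by positivity
      have := mul_le_mul_of_nonneg_left (mul_le_mul_of_nonneg_left hE ht0.le) h6
      linarith
    have hBndeq : (6 * q₀ / t + 6 * (q₀ * C ^ 2 + C) / X) * (t * Ef β₁ q₀ C t) * (t * X)
        = (6 * q₀ * X + 6 * (q₀ * C ^ 2 + C) * t) * (t * Ef β₁ q₀ C t) := by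
      field_simp
    exact le_of_mul_le_mul_right (by rw [hBndeq]; exact key2) htX
lemma hEf_pos_ev (hβ₁ : 0 < β₁) (hq₀ : 0 < q₀) (hC : 0 < C) :
    ∀ᶠ t in atTop, 0 < Ef β₁ q₀ C t := by
  filter_upwards [hE_lower hβ₁ hq₀ hC, eventually_ge_atTop (1:ℝ)] with t hE ht
  have hXpos : 0 < Xf β₁ q₀ t := Xf_pos hq₀ (by linarith)
  have ht0 : (0:ℝ) < t := by linarith
  refine lt_of_lt_of_le ?_ hE
  positivity

lemma hA_tendsto (hβ₁ : 0 < β₁) (hq₀ : 0 < q₀) (hC : 0 < C) :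
    Tendsto (fun t => Af β₁ q₀ C t) atTop atTop := by
  have hZ := hZ_tendsto hβ₁ hq₀ hC
  have hev : ∀ᶠ t in atTop, (Df β₁ q₀ C t) ^ 2 / (t * Ef β₁ q₀ C t) ∈ Set.Ioi (0:ℝ) := by
    filter_upwards [hEf_pos_ev hβ₁ hq₀ hC, eventually_ge_atTop (1:ℝ)] with t hE ht
    have ht0 : (0:ℝ) < t := by linarith
    have hD := Df_pos hβ₁ hq₀ hC ht0.le
    exact Set.mem_Ioi.mpr (by positivity)
  have h := (tendsto_nhdsWithin_iff.mpr ⟨hZ, hev⟩).inv_tendsto_nhdsGT_zero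
  refine h.congr' ?_
  filter_upwards [hEf_pos_ev hβ₁ hq₀ hC, eventually_ge_atTop (1:ℝ)] with t hE ht
  have ht0 : (0:ℝ) < t := by linarith
  have hD := Df_pos hβ₁ hq₀ hC ht0.le
  show ((Df β₁ q₀ C t) ^ 2 / (t * Ef β₁ q₀ C t))⁻¹ = Af β₁ q₀ C t
  unfold Af
  rw [inv_div]

lemma hfrac_tendsto (hβ₁ : 0 < β₁) (hq₀ : 0 < q₀) (hC : 0 < C) :
    Tendsto (fun t => Af β₁ q₀ C t / (1 + Af β₁ q₀ C t)) atTop (nhds 1) := by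
  have hA := hA_tendsto hβ₁ hq₀ hC
  have h1A : Tendsto (fun t => 1 + Af β₁ q₀ C t) atTop atTop :=
    tendsto_atTop_add_const_left _ 1 hA
  have hinv : Tendsto (fun t => (1 + Af β₁ q₀ C t)⁻¹) atTop (nhds 0) :=
    h1A.inv_tendsto_atTop
  have h : Tendsto (fun t => 1 - (1 + Af β₁ q₀ C t)⁻¹) atTop (nhds 1) := by
    simpa using tendsto_const_nhds.sub hinv
  refine h.congr' ?_
  filter_upwards [h1A.eventually_ge_atTop 1] with t h1
  have hne : (1 + Af β₁ q₀ C t) ≠ 0 := by linarith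
  field_simp
  ring

lemma tAd_eq (hβ₁ : 0 < β₁) (hq₀ : 0 < q₀) (hC : 0 < C) {t : ℝ} (ht : 0 < t)
    (hE : Ef β₁ q₀ C t ≠ 0) :
    t * Ad β₁ q₀ C t = Af β₁ q₀ C t *
      (1 + t * Ed β₁ q₀ C t / Ef β₁ q₀ C t - 2 * (t * Dd β₁ q₀ C t / Df β₁ q₀ C t)) := by
  have hD := (Df_pos hβ₁ hq₀ hC ht.le).ne'
  unfold Ad Af
  field_simp

lemma hterm_tendsto (hβ₁ : 0 < β₁) (hq₀ : 0 < q₀) (hC : 0 < C) :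
    Tendsto (fun t => t * Ad β₁ q₀ C t / (1 + Af β₁ q₀ C t) ^ 3) atTop (nhds 0) := by
  have hA := hA_tendsto hβ₁ hq₀ hC
  set M : ℝ := 8 * β₁ + 6 with hM
  have hA2 : Tendsto (fun t => (Af β₁ q₀ C t) ^ 2) atTop atTop := by
    have := hA.atTop_mul_atTop₀ hA
    refine this.congr fun t => by ring
  have hbnd : Tendsto (fun t => M / (Af β₁ q₀ C t) ^ 2) atTop (nhds 0) :=
    tendsto_const_nhds.div_atTop hA2
  refine squeeze_zero_norm' ?_ hbnd
  filter_upwards [hE_lower hβ₁ hq₀ hC, eventually_ge_atTop (1:ℝ),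
    (hX_tendsto hβ₁ hq₀).eventually_ge_atTop (2 * C * β₁ * (2 + β₁)),
    hA.eventually_ge_atTop 1] with t hE ht hXb hA1
  set X := Xf β₁ q₀ t with hXdef
  have ht0 : (0:ℝ) < t := by linarith
  have hx : (0:ℝ) < q₀ + t := by linarith
  have hXpos : (0:ℝ) < X := Xf_pos hq₀ ht0.le
  have hEpos : 0 < Ef β₁ q₀ C t := by
    refine lt_of_lt_of_le ?_ hE; positivity
  have hDpos := Df_pos hβ₁ hq₀ hC ht0.le
  have hEX : q₀ * X * X / 2 ≤ Ef β₁ q₀ C t := by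
    refine le_trans ?_ hE
    have : 0 ≤ β₁ ^ 2 * C * t * X := by positivity
    linarith
  have hEtX : β₁ ^ 2 * C * t * X / 2 ≤ Ef β₁ q₀ C t := by
    refine le_trans ?_ hE
    have : 0 ≤ q₀ * X * X := by positivity
    linarith
  have hS1 : q₀ * X * X ≤ 2 * Ef β₁ q₀ C t := by linarith
  have hS2 : β₁ ^ 2 * C * t * X ≤ 2 * Ef β₁ q₀ C t := by linarith
  have hXdval : Xd β₁ q₀ t = β₁ * X / (q₀ + t) := rfl
  have hXd0 : 0 ≤ Xd β₁ q₀ t := by rw [hXdval]; positivity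
  have htXd : t * Xd β₁ q₀ t ≤ β₁ * X := by
    rw [hXdval]
    have h1 : t * (β₁ * X / (q₀ + t)) = β₁ * X * (t / (q₀ + t)) := by ring
    have ht1 : t / (q₀ + t) ≤ 1 := by rw [div_le_one hx]; linarith
    rw [h1]
    nlinarith [mul_le_mul_of_nonneg_left ht1 (by positivity : (0:ℝ) ≤ β₁ * X)]
  have c1 : 2 * q₀ * X * (t * Xd β₁ q₀ t) ≤ 4 * β₁ * Ef β₁ q₀ C t := by
    nlinarith [mul_le_mul_of_nonneg_left htXd (by positivity : (0:ℝ) ≤ 2 * q₀ * X),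
      mul_le_mul_of_nonneg_left hS1 hβ₁.le]
  have c2 : β₁ ^ 2 * C * (t * X + t * (t * Xd β₁ q₀ t)) ≤ (2 + 2 * β₁) * Ef β₁ q₀ C t := by
    have h2 : t * (t * Xd β₁ q₀ t) ≤ t * (β₁ * X) := mul_le_mul_of_nonneg_left htXd ht0.le
    nlinarith [mul_le_mul_of_nonneg_left hS2 hβ₁.le,
      mul_le_mul_of_nonneg_left h2 (by positivity : (0:ℝ) ≤ β₁ ^ 2 * C)]
  have c3 : |q₀ * C * (2 - β₁) * (t * Xd β₁ q₀ t)| ≤ Ef β₁ q₀ C t := by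
    rw [abs_le]
    have h0 : 0 ≤ t * Xd β₁ q₀ t := by positivity
    have hb : q₀ * C * (2 + β₁) * (t * Xd β₁ q₀ t) ≤ q₀ * C * (2 + β₁) * (β₁ * X) :=
      mul_le_mul_of_nonneg_left htXd (by positivity)
    have hb2 : q₀ * C * (2 + β₁) * (β₁ * X) ≤ q₀ * X * X / 2 := by
      nlinarith [mul_le_mul_of_nonneg_left hXb (by positivity : (0:ℝ) ≤ q₀ * X / 2)]
    constructor <;> nlinarith [mul_le_mul_of_nonneg_right (by linarith : -(2+β₁) ≤ 2 - β₁) h0,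
      mul_le_mul_of_nonneg_right (by linarith : (2:ℝ) - β₁ ≤ 2 + β₁) h0,
      mul_nonneg (mul_nonneg hq₀.le hC.le) h0]
  have htEdeq : t * Ed β₁ q₀ C t = 2 * q₀ * X * (t * Xd β₁ q₀ t)
      + β₁ ^ 2 * C * (t * X + t * (t * Xd β₁ q₀ t)) + q₀ * C * (2 - β₁) * (t * Xd β₁ q₀ t) := by
    show t * (2 * q₀ * Xf β₁ q₀ t * Xd β₁ q₀ t + β₁ ^ 2 * C * (Xf β₁ q₀ t + t * Xd β₁ q₀ t)
      + q₀ * C * (2 - β₁) * Xd β₁ q₀ t) = _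
    rw [← hXdef]; ring
  have htEd : |t * Ed β₁ q₀ C t| ≤ (6 * β₁ + 3) * Ef β₁ q₀ C t := by
    rw [htEdeq, abs_le]
    have hc3 := abs_le.mp c3
    have d1 : 0 ≤ 2 * q₀ * X * (t * Xd β₁ q₀ t) := by positivity
    have d2 : 0 ≤ β₁ ^ 2 * C * (t * X + t * (t * Xd β₁ q₀ t)) := by positivity
    constructor <;> nlinarith [hc3.1, hc3.2, hβ₁, hEpos]
  have htDd0 : 0 ≤ t * Dd β₁ q₀ C t := by
    have : Dd β₁ q₀ C t = q₀ * Xd β₁ q₀ t + β₁ * C := rfl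
    rw [this]; positivity
  have htDd : t * Dd β₁ q₀ C t ≤ (β₁ + 1) * Df β₁ q₀ C t := by
    have h1 : t * Dd β₁ q₀ C t = q₀ * (t * Xd β₁ q₀ t) + β₁ * C * t := by
      show t * (q₀ * Xd β₁ q₀ t + β₁ * C) = _; ring
    have h2 : Df β₁ q₀ C t = q₀ * X + q₀ * C + β₁ * C * t := rfl
    rw [h1, h2]
    nlinarith [mul_le_mul_of_nonneg_left htXd hq₀.le, mul_nonneg hq₀.le hC.le,
      mul_nonneg (mul_nonneg hβ₁.le hC.le) ht0.le, mul_pos hq₀ hXpos]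
  set W : ℝ := 1 + t * Ed β₁ q₀ C t / Ef β₁ q₀ C t - 2 * (t * Dd β₁ q₀ C t / Df β₁ q₀ C t) with hWdef
  have hw1 : |t * Ed β₁ q₀ C t / Ef β₁ q₀ C t| ≤ 6 * β₁ + 3 := by
    rw [abs_div, abs_of_pos hEpos, div_le_iff₀ hEpos]
    linarith [htEd]
  have hw2 : 0 ≤ t * Dd β₁ q₀ C t / Df β₁ q₀ C t := by positivity
  have hw3 : t * Dd β₁ q₀ C t / Df β₁ q₀ C t ≤ β₁ + 1 := by
    rw [div_le_iff₀ hDpos]; linarith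
  have hW : |W| ≤ M := by
    rw [hWdef, hM, abs_le]
    have := abs_le.mp hw1
    constructor <;> [nlinarith [this.1, this.2, hw2, hw3]; nlinarith [this.1, this.2, hw2, hw3]]
  have hAfpos : 0 < Af β₁ q₀ C t := by linarith
  have h1Apos : (0:ℝ) < 1 + Af β₁ q₀ C t := by linarith
  have hMpos : (0:ℝ) ≤ M := by rw [hM]; linarith
  have habs : |t * Ad β₁ q₀ C t| ≤ Af β₁ q₀ C t * M := by
    have heq := tAd_eq hβ₁ hq₀ hC ht0 hEpos.ne'
    rw [heq, ← hWdef, abs_mul, abs_of_nonneg hAfpos.le]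
    exact mul_le_mul_of_nonneg_left hW hAfpos.le
  have hcube : (Af β₁ q₀ C t) ^ 3 ≤ (1 + Af β₁ q₀ C t) ^ 3 :=
    pow_le_pow_left₀ hAfpos.le (by linarith) 3
  calc ‖t * Ad β₁ q₀ C t / (1 + Af β₁ q₀ C t) ^ 3‖
      = |t * Ad β₁ q₀ C t| / (1 + Af β₁ q₀ C t) ^ 3 := by
        rw [Real.norm_eq_abs, abs_div, abs_of_pos (pow_pos h1Apos 3)]
    _ ≤ (Af β₁ q₀ C t * M) / (Af β₁ q₀ C t) ^ 3 :=
        div_le_div₀ (by positivity) habs (by positivity) hcube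
    _ = M / (Af β₁ q₀ C t) ^ 2 := by
        field_simp

lemma hF_tendsto (hβ₁ : 0 < β₁) (hq₀ : 0 < q₀) (hC : 0 < C) :
    Tendsto (fun t => Ff β₁ q₀ C t) atTop (nhds (-1)) := by
  have h := (hterm_tendsto hβ₁ hq₀ hC).sub (hfrac_tendsto hβ₁ hq₀ hC)
  have : (0:ℝ) - 1 = -1 := by norm_num
  rw [this] at h
  exact h

lemma phif_le (hβ₁ : 0 < β₁) (hq₀ : 0 < q₀) (hC : 0 < C) {t : ℝ} (ht : 0 ≤ t) :
    phif β₁ q₀ C t ≤ (q₀ + t) / q₀ := by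
  have hx : (0:ℝ) < q₀ + t := by linarith
  have hX : 0 < Xf β₁ q₀ t := Xf_pos hq₀ ht
  have hXC : 0 < Xf β₁ q₀ t + C := by linarith
  have hden : q₀ * (Xf β₁ q₀ t + C) ≤ Df β₁ q₀ C t := by
    unfold Df
    nlinarith [mul_nonneg (mul_nonneg hβ₁.le hC.le) ht]
  have h1 : phif β₁ q₀ C t ≤ (q₀ + t) * (Xf β₁ q₀ t + C) / (q₀ * (Xf β₁ q₀ t + C)) := by
    unfold phif
    exact div_le_div_of_nonneg_left (by positivity) (by positivity) hden
  refine h1.trans_eq ?_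
  rw [mul_div_mul_right _ _ hXC.ne']

end S14aux

theorem statement_14
    (α₂ β₁ q₀ C : ℝ) (hα₂ : 0 < α₂) (hβ₁ : 0 < β₁) (hq₀ : 0 < q₀) (hC : 0 < C)
    (r : ℝ → ℝ) (hr : ∀ v, 0 < v → 0 < r v)
    (κ η P₀ : ℝ → ℝ)
    (hκ : ∀ v, 0 < v → κ v = v * Real.exp (-(α₂ * r v)))
    (hη : ∀ v, 0 < v → η v = (q₀ + κ v) ^ β₁ / ((q₀ + κ v) ^ β₁ + C))
    (hP₀ : ∀ v, 0 < v → P₀ v = q₀ / (q₀ + κ v))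
    (hfoc : ∀ v, 0 < v →
      α₂ * β₁ * r v * (1 - η v) * (1 - P₀ v) + α₂ * r v * P₀ v = 1)
    (hdiff : DifferentiableOn ℝ r (Set.Ioi 0))
    (hdiff2 : DifferentiableOn ℝ (deriv r) (Set.Ioi 0)) :
    Tendsto (fun v => v ^ 2 * deriv (deriv r) v) atTop (nhds (-(1 / α₂))) := by
  have hκpos : ∀ v, 0 < v → 0 < κ v := by
    intro v hv; rw [hκ v hv]; positivity
  -- Step 1: FOC gives α₂ r = φ(κ)
  have hphi : ∀ v, 0 < v → α₂ * r v = phif β₁ q₀ C (κ v) := by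
    intro v hv
    have hfo := hfoc v hv
    rw [hη v hv, hP₀ v hv] at hfo
    have hk := hκpos v hv
    have hx : (0:ℝ) < q₀ + κ v := by linarith
    have hX : (0:ℝ) < (q₀ + κ v) ^ β₁ := Real.rpow_pos_of_pos hx β₁
    have hXC : (0:ℝ) < (q₀ + κ v) ^ β₁ + C := by linarith
    have hD : 0 < Df β₁ q₀ C (κ v) := Df_pos hβ₁ hq₀ hC hk.le
    have key : α₂ * r v * Df β₁ q₀ C (κ v)
        = (q₀ + κ v) * ((q₀ + κ v) ^ β₁ + C) := by
      have hD' : Df β₁ q₀ C (κ v) = q₀ * (q₀ + κ v) ^ β₁ + q₀ * C + β₁ * C * κ v := rfl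
      rw [hD']
      field_simp at hfo
      refine mul_right_cancel₀ hx.ne' ?_
      linear_combination (q₀ + κ v) * hfo
    have hphival : phif β₁ q₀ C (κ v)
        = (q₀ + κ v) * ((q₀ + κ v) ^ β₁ + C) / Df β₁ q₀ C (κ v) := rfl
    rw [hphival, eq_div_iff hD.ne']
    exact key
  -- Step 2: derivative of κ
  have hrd : ∀ v : ℝ, 0 < v → HasDerivAt r (deriv r v) v := by
    intro v hv
    exact (hdiff.differentiableAt (Ioi_mem_nhds hv)).hasDerivAt
  have hκd : ∀ v : ℝ, 0 < v →
      HasDerivAt κ (κ v / v * (1 - α₂ * v * deriv r v)) v := by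
    intro v hv
    have he : HasDerivAt (fun w => Real.exp (-(α₂ * r w)))
        (-(α₂ * deriv r v) * Real.exp (-(α₂ * r v))) v := by
      have h0 := (((hrd v hv).const_mul α₂).neg).exp
      simpa [mul_comm] using h0
    have h1 := (hasDerivAt_id v).mul he
    have h2 : κ =ᶠ[nhds v] fun w => w * Real.exp (-(α₂ * r w)) := by
      filter_upwards [Ioi_mem_nhds hv] with w hw
      exact hκ w hw
    have h3 := h1.congr_of_eventuallyEq h2
    refine h3.congr_deriv ?_
    rw [hκ v hv]
    simp only [id]
    field_simp
    ring
  -- Step 3: first-order identity for deriv r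
  have hDR : ∀ v : ℝ, 0 < v →
      α₂ * deriv r v = Ef β₁ q₀ C (κ v) / (Df β₁ q₀ C (κ v)) ^ 2
        * (κ v / v * (1 - α₂ * v * deriv r v)) := by
    intro v hv
    have hL : HasDerivAt (fun w => α₂ * r w) (α₂ * deriv r v) v :=
      (hrd v hv).const_mul α₂
    have hR : HasDerivAt (fun w => phif β₁ q₀ C (κ w))
        (Ef β₁ q₀ C (κ v) / (Df β₁ q₀ C (κ v)) ^ 2 * (κ v / v * (1 - α₂ * v * deriv r v))) v :=
      (hasDerivAt_phif hβ₁ hq₀ hC (hκpos v hv).le).comp v (hκd v hv)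
    have heq : (fun w => α₂ * r w) =ᶠ[nhds v] (fun w => phif β₁ q₀ C (κ w)) := by
      filter_upwards [Ioi_mem_nhds hv] with w hw
      exact hphi w hw
    exact ((hR.congr_of_eventuallyEq heq).unique hL).symm
  -- Step 4
  have h4 : ∀ v : ℝ, 0 < v →
      α₂ * v * deriv r v * (1 + Af β₁ q₀ C (κ v)) = Af β₁ q₀ C (κ v) := by
    intro v hv
    have hk := hκpos v hv
    have hD := Df_pos hβ₁ hq₀ hC hk.le
    have hA : Af β₁ q₀ C (κ v) = κ v * Ef β₁ q₀ C (κ v) / (Df β₁ q₀ C (κ v)) ^ 2 := rfl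
    have h := hDR v hv
    field_simp at h
    have key : α₂ * v * deriv r v * ((Df β₁ q₀ C (κ v)) ^ 2 + κ v * Ef β₁ q₀ C (κ v))
        = κ v * Ef β₁ q₀ C (κ v) := by linear_combination h
    have hD2 : (Df β₁ q₀ C (κ v)) ^ 2 ≠ 0 := pow_ne_zero 2 hD.ne'
    rw [hA]
    have expand : 1 + κ v * Ef β₁ q₀ C (κ v) / (Df β₁ q₀ C (κ v)) ^ 2
        = ((Df β₁ q₀ C (κ v)) ^ 2 + κ v * Ef β₁ q₀ C (κ v)) / (Df β₁ q₀ C (κ v)) ^ 2 := by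
      field_simp
    rw [mul_div_assoc] at expand ⊢
    rw [expand, mul_div_assoc', key, mul_div_assoc]
  have h5 : ∀ v : ℝ, 0 < v → 1 + Af β₁ q₀ C (κ v) ≠ 0 := by
    intro v hv h0
    have h := h4 v hv
    rw [h0, mul_zero] at h
    rw [← h] at h0
    norm_num at h0
  -- Step 5: second derivative identity
  have h7 : ∀ v : ℝ, 0 < v →
      (α₂ * deriv r v + α₂ * v * deriv (deriv r) v) * (1 + Af β₁ q₀ C (κ v))
        + (α₂ * v * deriv r v) * (Ad β₁ q₀ C (κ v) * (κ v / v * (1 - α₂ * v * deriv r v)))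
      = Ad β₁ q₀ C (κ v) * (κ v / v * (1 - α₂ * v * deriv r v)) := by
    intro v hv
    have hs : HasDerivAt (deriv r) (deriv (deriv r) v) v :=
      (hdiff2.differentiableAt (Ioi_mem_nhds hv)).hasDerivAt
    have hu : HasDerivAt (fun w => α₂ * w * deriv r w)
        (α₂ * deriv r v + α₂ * v * deriv (deriv r) v) v := by
      have := ((hasDerivAt_id v).const_mul α₂).mul hs
      exact this.congr_deriv (by simp only [id]; ring)
    have hAκ : HasDerivAt (fun w => Af β₁ q₀ C (κ w))
        (Ad β₁ q₀ C (κ v) * (κ v / v * (1 - α₂ * v * deriv r v))) v :=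
      (hasDerivAt_Af hβ₁ hq₀ hC (hκpos v hv).le).comp v (hκd v hv)
    have hG : HasDerivAt (fun w => α₂ * w * deriv r w * (1 + Af β₁ q₀ C (κ w)))
        ((α₂ * deriv r v + α₂ * v * deriv (deriv r) v) * (1 + Af β₁ q₀ C (κ v))
          + (α₂ * v * deriv r v) * (Ad β₁ q₀ C (κ v) * (κ v / v * (1 - α₂ * v * deriv r v)))) v :=
      hu.mul (hAκ.const_add 1)
    have heq : (fun w => α₂ * w * deriv r w * (1 + Af β₁ q₀ C (κ w)))
        =ᶠ[nhds v] (fun w => Af β₁ q₀ C (κ w)) := by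
      filter_upwards [Ioi_mem_nhds hv] with w hw
      exact h4 w hw
    exact ((hAκ.congr_of_eventuallyEq heq).unique hG).symm
  -- Step 6: closed formula for v² r''
  have h8 : ∀ v : ℝ, 0 < v →
      v ^ 2 * deriv (deriv r) v = (1 / α₂) * Ff β₁ q₀ C (κ v) := by
    intro v hv
    have h1A := h5 v hv
    have hfoc1 := h4 v hv
    have hsec := h7 v hv
    have hFf : Ff β₁ q₀ C (κ v) = κ v * Ad β₁ q₀ C (κ v) / (1 + Af β₁ q₀ C (κ v)) ^ 3
        - Af β₁ q₀ C (κ v) / (1 + Af β₁ q₀ C (κ v)) := rfl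
    rw [hFf]
    set a := Af β₁ q₀ C (κ v)
    set d := Ad β₁ q₀ C (κ v)
    set k := κ v
    set s := deriv r v
    set s2 := deriv (deriv r) v
    -- from hfoc1 : α₂ * v * s * (1+a) = a;  hsec as above
    have hvne : v ≠ 0 := hv.ne'
    have hkp : v * (k / v * (1 - α₂ * v * s)) = k * (1 - α₂ * v * s) := by
      field_simp
    have e2 := congrArg (fun z => z * v) hsec
    have e3 : (α₂ * s + α₂ * v * s2) * (1 + a) * v
        + (α₂ * v * s) * (d * (k * (1 - α₂ * v * s)))
        = d * (k * (1 - α₂ * v * s)) := by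
      linear_combination e2 - (α₂ * v * s * d - d) * hkp
    have hαne : α₂ ≠ 0 := hα₂.ne'
    have keyP : α₂ * (v ^ 2 * s2) * (1 + a) ^ 3 = k * d - a * (1 + a) ^ 2 := by
      linear_combination ((1 + a) ^ 2) * e3
        - (d * k * ((1 + a) * (1 - α₂ * v * s) + 1) + (1 + a) ^ 2) * hfoc1
    have hsplit : k * d / (1 + a) ^ 3 - a / (1 + a)
        = (k * d - a * (1 + a) ^ 2) / (1 + a) ^ 3 := by
      field_simp
    rw [hsplit, ← keyP]
    field_simp
  -- Step 7: κ tends to infinity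
  have hkinf : Tendsto κ atTop atTop := by
    rw [tendsto_atTop]
    intro b
    have hM1 : (1:ℝ) ≤ max b 1 := le_max_right _ _
    set M := max b 1 with hMdef
    have hMpos : (0:ℝ) < M := lt_of_lt_of_le one_pos hM1
    filter_upwards [eventually_ge_atTop (max (M * Real.exp ((q₀ + M) / q₀)) 1)] with v hvge
    have hv : (0:ℝ) < v := lt_of_lt_of_le one_pos (le_trans (le_max_right _ _) hvge)
    by_cases hcase : M ≤ κ v
    · exact le_trans (le_max_left b 1) hcase
    · push_neg at hcase
      have hk := hκpos v hv
      have hle : α₂ * r v ≤ (q₀ + κ v) / q₀ := by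
        rw [hphi v hv]
        exact phif_le hβ₁ hq₀ hC hk.le
      have hle2 : α₂ * r v ≤ (q₀ + M) / q₀ :=
        hle.trans ((div_le_div_iff_of_pos_right hq₀).mpr (by linarith))
      have hexp : Real.exp (-((q₀ + M) / q₀)) ≤ Real.exp (-(α₂ * r v)) :=
        Real.exp_le_exp.mpr (by linarith)
      have hkv : κ v = v * Real.exp (-(α₂ * r v)) := hκ v hv
      have hge : M * Real.exp ((q₀ + M) / q₀) * Real.exp (-((q₀ + M) / q₀)) ≤ κ v := by
        rw [hkv]
        have h1 : M * Real.exp ((q₀ + M) / q₀) ≤ v := le_trans (le_max_left _ _) hvge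
        have h2 : (0:ℝ) < Real.exp (-((q₀ + M) / q₀)) := Real.exp_pos _
        calc M * Real.exp ((q₀ + M) / q₀) * Real.exp (-((q₀ + M) / q₀))
            ≤ v * Real.exp (-((q₀ + M) / q₀)) := mul_le_mul_of_nonneg_right h1 h2.le
          _ ≤ v * Real.exp (-(α₂ * r v)) := mul_le_mul_of_nonneg_left hexp hv.le
      have heq : M * Real.exp ((q₀ + M) / q₀) * Real.exp (-((q₀ + M) / q₀)) = M := by
        rw [mul_assoc, ← Real.exp_add]
        simp
      rw [heq] at hge
      exact le_trans (le_max_left b 1) hge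
  -- Conclusion
  have hcomp : Tendsto (fun v => Ff β₁ q₀ C (κ v)) atTop (nhds (-1)) :=
    (hF_tendsto hβ₁ hq₀ hC).comp hkinf
  have hmul := hcomp.const_mul (1 / α₂)
  have hval : 1 / α₂ * (-1) = -(1 / α₂) := by ring
  rw [hval] at hmul
  refine hmul.congr' ?_
  filter_upwards [eventually_gt_atTop (0:ℝ)] with v hv
  exact (h8 v hv).symm
end

section
/- Assume in addition that r is differentiable on (0, +∞), and let C₁ > 0, C₂ > 0. Define the consumer utility S_C(v) = ln((q₀ + κ(v))^β₁·C₁ + C₂). Then there exists v̄ > 0 such that S_C is strictly increasing on (v̄, +∞). -/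
open Filter Real

theorem statement_17
    (α₂ β₁ q₀ C : ℝ) (hα₂ : 0 < α₂) (hβ₁ : 0 < β₁) (hq₀ : 0 < q₀) (hC : 0 < C)
    (r : ℝ → ℝ) (hr : ∀ v, 0 < v → 0 < r v)
    (κ η P₀ : ℝ → ℝ)
    (hκ : ∀ v, 0 < v → κ v = v * Real.exp (-(α₂ * r v)))
    (hη : ∀ v, 0 < v → η v = (q₀ + κ v) ^ β₁ / ((q₀ + κ v) ^ β₁ + C))
    (hP₀ : ∀ v, 0 < v → P₀ v = q₀ / (q₀ + κ v))
    (hfoc : ∀ v, 0 < v →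
      α₂ * β₁ * r v * (1 - η v) * (1 - P₀ v) + α₂ * r v * P₀ v = 1)
    (hdiff : DifferentiableOn ℝ r (Set.Ioi 0))
    (C₁ C₂ : ℝ) (hC₁ : 0 < C₁) (hC₂ : 0 < C₂)
    (S_C : ℝ → ℝ) (hS : ∀ v, 0 < v → S_C v = Real.log ((q₀ + κ v) ^ β₁ * C₁ + C₂)) :
    ∃ vbar > (0 : ℝ), StrictMonoOn S_C (Set.Ioi vbar) := by
  -- κ is positive on (0,∞)
  have hκpos : ∀ v, 0 < v → 0 < κ v := by
    intro v hv; rw [hκ v hv]; positivity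
  -- κ v ≤ v
  have hκle : ∀ v, 0 < v → κ v ≤ v := by
    intro v hv
    rw [hκ v hv]
    calc v * Real.exp (-(α₂ * r v)) ≤ v * 1 := by
          apply mul_le_mul_of_nonneg_left _ hv.le
          rw [Real.exp_le_one_iff]
          have := hr v hv
          nlinarith
      _ = v := mul_one v
  -- κ is injective on (0,∞)
  have hinj : Set.InjOn κ (Set.Ioi 0) := by
    intro a ha b hb hab
    simp only [Set.mem_Ioi] at ha hb
    have hka := hκpos a ha
    have hkb := hκpos b hb
    -- common "bracket" value
    set B : ℝ → ℝ := fun v => β₁ * (1 - η v) * (1 - P₀ v) + P₀ v with hB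
    have hBab : B a = B b := by
      simp only [hB, hη a ha, hη b hb, hP₀ a ha, hP₀ b hb, hab]
    have hfa : α₂ * r a * B a = 1 := by
      have := hfoc a ha; simp only [hB]; nlinarith [this]
    have hfb : α₂ * r b * B b = 1 := by
      have := hfoc b hb; simp only [hB]; nlinarith [this]
    -- B a > 0
    have hBpos : 0 < B a := by
      have hqa : 0 < q₀ + κ a := by linarith
      have hx : 0 < (q₀ + κ a) ^ β₁ := Real.rpow_pos_of_pos hqa β₁
      have hη1 : η a ≤ 1 := by
        rw [hη a ha, div_le_one (by linarith)]; linarith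
      have hP1 : P₀ a ≤ 1 := by
        rw [hP₀ a ha, div_le_one hqa]; linarith
      have hP0 : 0 < P₀ a := by
        rw [hP₀ a ha]; positivity
      simp only [hB]
      nlinarith [mul_nonneg (mul_nonneg hβ₁.le (sub_nonneg.mpr hη1)) (sub_nonneg.mpr hP1)]
    have hrab : r a = r b := by
      rw [hBab] at hfa
      have hBb : 0 < B b := by rw [← hBab]; exact hBpos
      have := hfa.trans hfb.symm
      have h2 : α₂ * B b * r a = α₂ * B b * r b := by ring_nf; ring_nf at this; linarith
      exact mul_left_cancel₀ (by positivity) h2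
    have : a * Real.exp (-(α₂ * r a)) = b * Real.exp (-(α₂ * r a)) := by
      rw [← hκ a ha, hab, hκ b hb, hrab]
    exact mul_right_cancel₀ (Real.exp_ne_zero _) this
  -- κ is continuous on (0,∞)
  have hcont : ContinuousOn κ (Set.Ioi 0) := by
    have hrc : ContinuousOn r (Set.Ioi 0) := hdiff.continuousOn
    have h1 : ContinuousOn (fun v => v * Real.exp (-(α₂ * r v))) (Set.Ioi 0) :=
      continuousOn_id.mul (Real.continuous_exp.comp_continuousOn
        ((continuousOn_const.mul hrc).neg))
    exact h1.congr hκ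
  -- κ is strictly increasing on (0,∞)
  have hmono : StrictMonoOn κ (Set.Ioi 0) := by
    intro a ha b hb hab
    simp only [Set.mem_Ioi] at ha hb
    have hkb := hκpos b hb
    set ε : ℝ := min a (κ b) / 2 with hε
    have hεpos : 0 < ε := by positivity
    have hεa : ε ≤ a := by
      have : min a (κ b) ≤ a := min_le_left _ _
      linarith
    have hεκb : ε < κ b := by
      have : min a (κ b) ≤ κ b := min_le_right _ _
      linarith
    have hεb : ε ≤ b := le_trans hεa hab.le
    have hsub : Set.Icc ε b ⊆ Set.Ioi 0 := fun x hx => lt_of_lt_of_le hεpos hx.1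
    rcases ContinuousOn.strictMonoOn_of_injOn_Icc' hεb (hcont.mono hsub)
        (hinj.mono hsub) with hm | han
    · exact hm ⟨hεa, hab.le⟩ ⟨hεb, le_refl b⟩ hab
    · exfalso
      have h1 : κ b < κ ε := han ⟨le_refl ε, hεb⟩ ⟨hεb, le_refl b⟩ (lt_of_le_of_lt hεa hab)
      have h2 : κ ε ≤ ε := hκle ε hεpos
      linarith
  -- conclude
  refine ⟨1, one_pos, ?_⟩
  intro a ha b hb hab
  simp only [Set.mem_Ioi] at ha hb
  have ha0 : (0:ℝ) < a := lt_trans one_pos ha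
  have hb0 : (0:ℝ) < b := lt_trans one_pos hb
  rw [hS a ha0, hS b hb0]
  have hk : κ a < κ b := hmono ha0 hb0 hab
  have hqa : 0 < q₀ + κ a := by have := hκpos a ha0; linarith
  have hrp : (q₀ + κ a) ^ β₁ < (q₀ + κ b) ^ β₁ :=
    Real.rpow_lt_rpow hqa.le (by linarith) hβ₁
  have hxa : 0 < (q₀ + κ a) ^ β₁ := Real.rpow_pos_of_pos hqa β₁
  apply Real.log_lt_log (by positivity)
  nlinarith
end
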